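/- arXiv:2509.05854 — 7 statements merged into one kernel-verified Lean document; each statement's English description precedes it below -/
import Mathlib

section
/- Let κ ≥ λ be infinite regular cardinals. Then the relation (ℕ→ℕ, ≤_∞) fails to have calibre (κ, λ) if and only if λ = 𝔟 = 𝔡 = κ. -/
open Set Topology Filter

universe u v u' v'

/-- A relation: a triple consisting of a domain, a range, and a relation between them. -/
structure TRel : Type (max (u + 1) (v + 1)) where
  dom : Type u
  rng : Type v
  rel : dom → rng → Prop

namespace TRel

/-- A Tukey morphism from `A` to `B`: `A ≥_T B`. -/
def Tukey (A : TRel.{u, v}) (B : TRel.{u', v'}) : Prop :=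
  ∃ (ψ : B.dom → A.dom) (φ : A.rng → B.rng),
    ∀ (b : B.dom) (a : A.rng), A.rel (ψ b) a → B.rel b (φ a)

/-- Tukey equivalence. -/
def TukeyEquiv (A : TRel.{u, v}) (B : TRel.{u', v'}) : Prop :=
  A.Tukey B ∧ B.Tukey A

/-- `C` is cofinal in the relation `A`. -/
def Cofinal (A : TRel) (C : Set A.rng) : Prop :=
  ∀ x : A.dom, ∃ y ∈ C, A.rel x y

/-- `U` is bounded in the relation `A`. -/
def Bounded (A : TRel) (U : Set A.dom) : Prop :=
  ∃ y : A.rng, ∀ x ∈ U, A.rel x y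

/-- The cofinality of a relation: the least cardinality of a cofinal set. -/
noncomputable def cofin (A : TRel) : Cardinal :=
  sInf {c | ∃ C : Set A.rng, A.Cofinal C ∧ Cardinal.mk C = c}

/-- The additivity of a relation: the least cardinality of an unbounded set. -/
noncomputable def addit (A : TRel) : Cardinal :=
  sInf {c | ∃ U : Set A.dom, ¬A.Bounded U ∧ Cardinal.mk U = c}

/-- A relation has calibre `(κ, lam)` if every κ-sized subset of the domain has
a lam-sized subset which is bounded. -/
def Calibre (A : TRel) (κ lam : Cardinal) : Prop :=
  ∀ S : Set A.dom, Cardinal.mk S = κ → ∃ T ⊆ S, Cardinal.mk T = lam ∧ A.Bounded T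

/-- The product of two relations. -/
def prod (A : TRel.{u, v}) (B : TRel.{u', v'}) : TRel :=
  ⟨A.dom × B.dom, A.rng × B.rng, fun x y => A.rel x.1 y.1 ∧ B.rel x.2 y.2⟩

/-- `A & B`, read `A with B`. -/
def with' (A : TRel.{u, v}) (B : TRel.{u', v'}) : TRel :=
  ⟨A.dom ⊕ B.dom, A.rng × B.rng,
    fun x y => Sum.elim (fun a => A.rel a y.1) (fun b => B.rel b y.2) x⟩

/-- The sum `A + B` of two relations. -/
def add (A : TRel.{u, v}) (B : TRel.{u', v'}) : TRel :=
  ⟨A.dom ⊕ B.dom, A.rng ⊕ B.rng,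
    fun x y =>
      match x, y with
      | Sum.inl a, Sum.inl b => A.rel a b
      | Sum.inr a, Sum.inr b => B.rel a b
      | _, _ => False⟩

/-- The sum of a family of relations. -/
def sigmaSum {ι : Type*} (A : ι → TRel.{u, v}) : TRel :=
  ⟨Σ i, (A i).dom, Σ i, (A i).rng,
    fun x y => ∃ (i : ι) (a : (A i).dom) (b : (A i).rng),
      x = ⟨i, a⟩ ∧ y = ⟨i, b⟩ ∧ (A i).rel a b⟩

end TRel

/-- `f ≤* g`: eventual domination. -/
def leStar (f g : ℕ → ℕ) : Prop := {n | ¬f n ≤ g n}.Finite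

/-- `f ≤_∞ g`: `f n ≤ g n` for infinitely many `n`. -/
def leInf (f g : ℕ → ℕ) : Prop := {n | f n ≤ g n}.Infinite

/-- The relation `(ℕ → ℕ, ≤*)`. -/
def leStarRel : TRel := ⟨ℕ → ℕ, ℕ → ℕ, leStar⟩

/-- The relation `(ℕ → ℕ, ≤_∞)`. -/
def leInfRel : TRel := ⟨ℕ → ℕ, ℕ → ℕ, leInf⟩

/-- The relation `ω = (ℕ, ℕ, ≤)`. -/
def omegaRel : TRel := ⟨ℕ, ℕ, (· ≤ ·)⟩

/-- The Baire space `(ℕ → ℕ, ≤)` with the coordinatewise order. -/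
def baireRel : TRel := ⟨ℕ → ℕ, ℕ → ℕ, (· ≤ ·)⟩

/-- The bounding number `𝔟`. -/
noncomputable def bCard : Cardinal := leStarRel.addit

/-- The dominating number `𝔡`. -/
noncomputable def dCard : Cardinal := leStarRel.cofin

section Topology

variable (X : Type u) [TopologicalSpace X]

/-- The infinite convergent sequences with their limit: images of embeddings of `ω + 1`. -/
def CSplus : Set (Set X) :=
  {S | ∃ e : OnePoint ℕ → X, Topology.IsEmbedding e ∧ S = Set.range e}

/-- The infinite convergent sequences without their limit. -/
def CS : Set (Set X) :=
  {S | ∃ e : OnePoint ℕ → X, Topology.IsEmbedding e ∧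
    S = e '' Set.range ((↑) : ℕ → OnePoint ℕ)}

/-- The infinite convergent sequences converging to `x`, without the limit `x`. -/
def CSpt {X : Type u} [TopologicalSpace X] (x : X) : Set (Set X) :=
  {S | ∃ e : OnePoint ℕ → X, Topology.IsEmbedding e ∧ e OnePoint.infty = x ∧
    S = e '' Set.range ((↑) : ℕ → OnePoint ℕ)}

/-- The non-closed subsets of `X`. -/
def NC : Set (Set X) := {F | ¬IsClosed F}

/-- `S ̸⊥ T` : `S ∩ T` is not closed in the subspace `T`. -/
def NotClosedIn {X : Type u} [TopologicalSpace X] (S T : Set X) : Prop :=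
  ¬∃ C : Set X, IsClosed C ∧ S ∩ T = C ∩ T

/-- The k-structure `𝐤(X) = (CS(X), K(X), ̸⊥)`. -/
def kRel : TRel :=
  ⟨↥(CS X), {K : Set X // IsCompact K}, fun S K => NotClosedIn S.1 K.1⟩

/-- The compact-cover structure `𝐤𝐜(X) = (X, K(X), ∈)`. -/
def kcRel : TRel :=
  ⟨X, {K : Set X // IsCompact K}, fun x K => x ∈ K.1⟩

/-- The sequential structure `𝐬𝐞𝐪(X) = (CS(X), CS(X), ii)`. -/
def seqRel : TRel :=
  ⟨↥(CS X), ↥(CS X), fun S T => (S.1 ∩ T.1).Infinite⟩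

/-- The relation `𝐬𝐞𝐪(x, X) = (CS(x,X), CS(x,X), ii)`. -/
def seqPtRel {X : Type u} [TopologicalSpace X] (x : X) : TRel :=
  ⟨↥(CSpt x), ↥(CSpt x), fun S T => (S.1 ∩ T.1).Infinite⟩

/-- The set `X′` of non-isolated points of `X`. -/
def nonIsolated : Set X := {x | ¬IsOpen ({x} : Set X)}

/-- The set `X^#` of points of `X` with no compact neighborhood. -/
def nonLC : Set X := {x | ¬∃ K : Set X, IsCompact K ∧ K ∈ nhds x}

end Topology

/-- The relation `P(κ) = ((([κ]^{<ω})^ω)_∞, i_∞)`. -/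
def Prel (κ : Cardinal.{u}) : TRel :=
  ⟨{F : ℕ → Finset κ.out // {n | F n ≠ ∅}.Infinite},
   {F : ℕ → Finset κ.out // {n | F n ≠ ∅}.Infinite},
   fun F G => {n | ∃ x, x ∈ F.1 n ∧ x ∈ G.1 n}.Infinite⟩

/-- The relation `((∏_n [κ_n]^{<ω})_∞, i_∞)` for a sequence of cardinals `κ_n = c n`. -/
def Qrel (c : ℕ → Cardinal.{u}) : TRel :=
  ⟨{F : (n : ℕ) → Finset (c n).out // {n | F n ≠ ∅}.Infinite},
   {F : (n : ℕ) → Finset (c n).out // {n | F n ≠ ∅}.Infinite},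
   fun F G => {n | ∃ x, x ∈ F.1 n ∧ x ∈ G.1 n}.Infinite⟩

/-- The relation `(κ, =)` for a cardinal `κ`. -/
def eqCardRel (κ : Cardinal.{u}) : TRel := ⟨κ.out, κ.out, Eq⟩

/-- The relation `(Λ, =)` for a set `Λ`. -/
def eqSetRel {X : Type u} (A : Set X) : TRel := ⟨↥A, ↥A, Eq⟩

/-- The relation `S(κ) = Σ_n P(κ_n) × (κ_n, =)` for a sequence of cardinals `κ_n = c n`. -/
def Srel (c : ℕ → Cardinal.{u}) : TRel :=
  TRel.sigmaSum fun n => (Prel (c n)).prod (eqCardRel (c n))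

/-- The relation `𝟎` with empty domain and range. -/
def zeroRel : TRel := ⟨PEmpty, PEmpty, fun _ _ => False⟩

section CalibreAux

open Cardinal

lemma auxLeStar_trans {f g h : ℕ → ℕ} (h1 : leStar f g) (h2 : leStar g h) : leStar f h := by
  apply Set.Finite.subset (h1.union h2)
  intro n hn
  simp only [Set.mem_setOf_eq, Set.mem_union] at *
  by_contra hc; push_neg at hc
  exact hn (hc.1.trans hc.2)

lemma auxLeStar_of_le {f g : ℕ → ℕ} (h : ∀ n, f n ≤ g n) : leStar f g := by
  have : {n | ¬ f n ≤ g n} = ∅ := by ext n; simp [h n]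
  unfold leStar; rw [this]; exact Set.finite_empty

lemma aux_not_leStar_succ_self (f : ℕ → ℕ) : ¬ leStar (fun n => f n + 1) f := by
  intro h
  unfold leStar at h
  have hsub : (Set.univ : Set ℕ) ⊆ {n : ℕ | ¬ (fun n => f n + 1) n ≤ f n} := by
    intro n _
    simp only [Set.mem_setOf_eq]
    omega
  exact Set.infinite_univ (h.subset hsub)

lemma aux_not_leInf {f g : ℕ → ℕ} : ¬ leInf f g ↔ leStar (fun n => g n + 1) f := by
  unfold leInf leStar
  rw [Set.not_infinite]
  have : {n | ¬ (fun n => g n + 1) n ≤ f n} = {n | f n ≤ g n} := by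
    ext n; simp only [Set.mem_setOf_eq]; omega
  rw [this]

lemma aux_leInf_of_not_leStar {f g : ℕ → ℕ} (h : ¬ leStar g f) : leInf f g := by
  have h' : {n | ¬ g n ≤ f n}.Infinite := h
  apply h'.mono
  intro n hn
  simp only [Set.mem_setOf_eq] at *
  omega

lemma aux_not_bounded_univ : ¬ leStarRel.Bounded Set.univ := by
  rintro ⟨y, hy⟩
  exact aux_not_leStar_succ_self y (hy (fun n => y n + 1) (Set.mem_univ _))

lemma aux_cofinal_univ : leStarRel.Cofinal Set.univ :=
  fun x => ⟨x, Set.mem_univ _, auxLeStar_of_le fun _ => le_rfl⟩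

lemma aux_b_le_mk {U : Set (ℕ → ℕ)} (h : ¬ leStarRel.Bounded U) : bCard ≤ #U :=
  csInf_le (OrderBot.bddBelow _) ⟨U, h, rfl⟩

lemma aux_d_le_mk {C : Set (ℕ → ℕ)} (h : leStarRel.Cofinal C) : dCard ≤ #C :=
  csInf_le (OrderBot.bddBelow _) ⟨C, h, rfl⟩

lemma aux_bounded_of_mk_lt {U : Set (ℕ → ℕ)} (h : #U < bCard) : leStarRel.Bounded U := by
  by_contra hb
  exact absurd (aux_b_le_mk hb) (not_le.mpr h)

lemma aux_exists_unbounded : ∃ U : Set (ℕ → ℕ), ¬ leStarRel.Bounded U ∧ #U = bCard := by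
  have hne : {c | ∃ U : Set (ℕ → ℕ), ¬ leStarRel.Bounded U ∧ #U = c}.Nonempty :=
    ⟨_, Set.univ, aux_not_bounded_univ, rfl⟩
  exact csInf_mem hne

lemma aux_exists_dominating : ∃ C : Set (ℕ → ℕ), leStarRel.Cofinal C ∧ #C = dCard := by
  have hne : {c | ∃ C : Set (ℕ → ℕ), leStarRel.Cofinal C ∧ #C = c}.Nonempty :=
    ⟨_, Set.univ, aux_cofinal_univ, rfl⟩
  exact csInf_mem hne

lemma aux_cofinal_not_bounded {C : Set (ℕ → ℕ)} (h : leStarRel.Cofinal C) :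
    ¬ leStarRel.Bounded C := by
  rintro ⟨y, hy⟩
  obtain ⟨g, hgC, hg⟩ := h (fun n => y n + 1)
  exact aux_not_leStar_succ_self y (auxLeStar_trans hg (hy g hgC))

lemma aux_b_le_d : bCard ≤ dCard := by
  obtain ⟨C, hC, hCc⟩ := aux_exists_dominating
  rw [← hCc]
  exact aux_b_le_mk (aux_cofinal_not_bounded hC)

/-- Scale construction: if `𝔟 = 𝔡 = κ` then there is a `≤*`-increasing dominating
κ-sequence. -/
lemma aux_scale (κ : Cardinal.{0}) (hb : bCard = κ) (hd : dCard = κ) :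
    ∃ f : κ.ord.ToType → (ℕ → ℕ),
      (∀ b a, b < a → leStar (fun n => f b n + 1) (f a)) ∧
      (∀ g : ℕ → ℕ, ∃ a, leStar g (f a)) := by
  obtain ⟨C, hC, hCcard⟩ := aux_exists_dominating
  have hcard : #(κ.ord.ToType) = #C := by
    rw [Cardinal.mk_toType, Cardinal.card_ord, hCcard, hd]
  obtain ⟨e⟩ := Cardinal.eq.mp hcard
  set d : κ.ord.ToType → (ℕ → ℕ) := fun a => (e a).1 with hdDef
  have hdom : ∀ g : ℕ → ℕ, ∃ a, leStar g (d a) := by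
    intro g
    obtain ⟨y, hyC, hy⟩ := hC g
    exact ⟨e.symm ⟨y, hyC⟩, by simp only [hdDef, Equiv.apply_symm_apply]; exact hy⟩
  have key : ∀ (a : κ.ord.ToType) (prev : ∀ b, b < a → (ℕ → ℕ)), ∃ v : ℕ → ℕ,
      (∀ b (h : b < a), leStar (fun n => prev b h n + 1) v) ∧ (∀ n, d a n ≤ v n) := by
    intro a prev
    have hV : #(Set.range (fun b : {b // b < a} => prev b.1 b.2)) < bCard := by
      rw [hb]
      refine lt_of_le_of_lt Cardinal.mk_range_le ?_
      exact Cardinal.mk_Iio_ord_toType a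
    obtain ⟨y, hy⟩ := aux_bounded_of_mk_lt hV
    refine ⟨fun n => max (y n + 1) (d a n), ?_, fun n => le_max_right _ _⟩
    intro b h
    have hby : leStar (prev b h) y := hy _ ⟨⟨b, h⟩, rfl⟩
    apply Set.Finite.subset hby
    intro n hn
    simp only [Set.mem_setOf_eq] at *
    omega
  choose step hstep1 hstep2 using key
  have wf : WellFounded ((· < ·) : κ.ord.ToType → κ.ord.ToType → Prop) := wellFounded_lt
  refine ⟨wf.fix step, ?_, ?_⟩
  · intro b a h
    rw [wf.fix_eq step a]
    exact hstep1 a (fun y _ => wf.fix step y) b h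
  · intro g
    obtain ⟨a, ha⟩ := hdom g
    refine ⟨a, auxLeStar_trans ha ?_⟩
    rw [wf.fix_eq step a]
    exact auxLeStar_of_le (hstep2 a _)

end CalibreAux

section Main
open Cardinal

/-- for infinite regular cardinals `κ ≥ λ`, the relation `(ℕ→ℕ, ≤_∞)`
fails calibre `(κ, λ)` iff `λ = 𝔟 = 𝔡 = κ`. -/
theorem leInf_not_calibre_iff (κ lam : Cardinal.{0}) (hκ : κ.IsRegular)
    (hlam : lam.IsRegular) (hle : lam ≤ κ) :
    ¬leInfRel.Calibre κ lam ↔ (lam = bCard ∧ bCard = dCard ∧ dCard = κ) := by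
  constructor
  · intro hcal
    unfold TRel.Calibre at hcal
    push_neg at hcal
    obtain ⟨S, hScard, hS⟩ := hcal
    -- hS : ∀ T ⊆ S, #T = lam → ¬ Bounded T
    -- Step A : dCard ≤ lam
    have hdlam : dCard ≤ lam := by
      have hlamS : lam ≤ #S := by rw [hScard]; exact hle
      obtain ⟨T, hTS, hTcard⟩ := Cardinal.le_mk_iff_exists_subset.mp hlamS
      have hTub := hS T hTS hTcard
      have hcof : leStarRel.Cofinal T := by
        intro h0
        unfold TRel.Bounded at hTub
        push_neg at hTub
        obtain ⟨x, hxT, hx⟩ := hTub h0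
        refine ⟨x, hxT, ?_⟩
        have hx2 : ¬ leInf x h0 := hx
        have := aux_not_leInf.mp hx2
        exact auxLeStar_trans (auxLeStar_of_le fun n => Nat.le_succ _) this
      exact (aux_d_le_mk hcof).trans_eq hTcard
    -- Step B : κ ≤ bCard
    have hκb : κ ≤ bCard := by
      by_contra hlt
      push_neg at hlt
      obtain ⟨U, hUub, hUcard⟩ := aux_exists_unbounded
      have hchoose : ∀ x : S, ∃ u : U, leInf x.1 u.1 := by
        intro x
        unfold TRel.Bounded at hUub
        push_neg at hUub
        obtain ⟨u, huU, hu⟩ := hUub x.1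
        exact ⟨⟨u, huU⟩, aux_leInf_of_not_leStar hu⟩
      choose ψ hψ using hchoose
      -- some fiber has size ≥ lam
      have hfiber : ∃ u : U, lam ≤ #{x : S // ψ x = u} := by
        by_contra hall
        push_neg at hall
        have hsum : #S = Cardinal.sum fun u : U => #{x : S // ψ x = u} := by
          rw [← Cardinal.mk_sigma]
          exact Cardinal.mk_congr (Equiv.sigmaFiberEquiv ψ).symm
        have hlt2 : #S < κ := by
          rw [hsum]
          refine Cardinal.sum_lt_of_isRegular hκ ?_ ?_
          · rw [hUcard]; exact hlt
          · exact fun u => (hall u).trans_le hle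
        exact absurd hScard (ne_of_lt hlt2)
      obtain ⟨u, hu⟩ := hfiber
      -- turn the fiber into a subset of ℕ→ℕ
      set W : Set (ℕ → ℕ) := Subtype.val '' {x : S | ψ x = u} with hWdef
      have hWcard : lam ≤ #W := by
        rw [hWdef]
        exact hu.trans_eq (Cardinal.mk_image_eq Subtype.val_injective).symm
      obtain ⟨T, hTW, hTcard⟩ := Cardinal.le_mk_iff_exists_subset.mp hWcard
      have hTS : T ⊆ S := hTW.trans (by rintro z ⟨x, _, rfl⟩; exact x.2)
      refine hS T hTS hTcard ⟨u.1, ?_⟩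
      intro z hzT
      obtain ⟨x, hx, rfl⟩ := hTW hzT
      rw [← hx]
      exact hψ x
    have hbd := aux_b_le_d
    refine ⟨le_antisymm (hle.trans hκb) (hbd.trans hdlam), le_antisymm hbd ?_, le_antisymm (hdlam.trans hle) (hκb.trans hbd)⟩
    exact (hdlam.trans hle).trans hκb
  · rintro ⟨h1, h2, h3⟩
    have hb : bCard = κ := by rw [h2, h3]
    have hd : dCard = κ := h3
    have hlk : lam = κ := by rw [h1, hb]
    obtain ⟨f, hf1, hf2⟩ := aux_scale κ hb hd
    have hfinj : Function.Injective f := by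
      intro b a hba
      by_contra hne
      rcases lt_or_gt_of_ne hne with h | h
      · have := hf1 b a h; rw [hba] at this
        exact aux_not_leStar_succ_self (f a) this
      · have := hf1 a b h; rw [hba] at this
        exact aux_not_leStar_succ_self (f a) this
    intro hcal
    obtain ⟨T, hTS, hTcard, g, hg⟩ := hcal (Set.range f)
      (by have h := Cardinal.mk_range_eq f hfinj; rw [Cardinal.mk_toType, Cardinal.card_ord] at h; exact h)
    -- index set of T
    set I : Set (κ.ord.ToType) := f ⁻¹' T with hIdef
    have hIcard : κ ≤ #I := by
      rw [hIdef, Cardinal.mk_preimage_of_injective_of_subset_range f T hfinj hTS]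
      exact (hTcard.trans hlk).ge
    obtain ⟨a, ha⟩ := hf2 (fun n => g n + 1)
    have hIunb : ∃ c ∈ I, a ≤ c := by
      by_contra hno
      push_neg at hno
      have hsub : I ⊆ Set.Iio a := fun c hc => hno c hc
      have := (Cardinal.mk_le_mk_of_subset hsub).trans_lt (Cardinal.mk_Iio_ord_toType a)
      exact absurd hIcard (not_le.mpr this)
    obtain ⟨c, hcI, hac⟩ := hIunb
    have hgc : leStar (fun n => g n + 1) (f c) := by
      rcases eq_or_lt_of_le hac with rfl | h
      · exact ha
      · exact auxLeStar_trans
          (auxLeStar_trans ha (auxLeStar_of_le fun n => Nat.le_succ _)) (hf1 a c h)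
    exact aux_not_leInf.mpr hgc (hg (f c) hcI)

end Main
end

section
/- There is no Tukey morphism from (ℕ→ℕ, ≤_∞) & ω to (ℕ→ℕ, ≤_∞) × ω; that is, (ℕ→ℕ, ≤_∞) & ω ̸≥_T (ℕ→ℕ, ≤_∞) × ω. -/
open Set Topology Filter

universe u v u' v'

/-- `(ℕ→ℕ, ≤_∞) & ω ̸≥_T (ℕ→ℕ, ≤_∞) × ω`. -/
theorem with_not_tukey_prod : ¬(leInfRel.with' omegaRel).Tukey (leInfRel.prod omegaRel) := by
  rintro ⟨ψ, φ, hm⟩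
  change ((ℕ → ℕ) × ℕ) → ((ℕ → ℕ) ⊕ ℕ) at ψ
  change ((ℕ → ℕ) × ℕ) → ((ℕ → ℕ) × ℕ) at φ
  -- Step 1: for each g there are m, n with ψ (g, m) = inr n
  have step1 : ∀ g : ℕ → ℕ, ∃ m n : ℕ, ψ (g, m) = (Sum.inr n : (ℕ → ℕ) ⊕ ℕ) := by
    intro g
    by_contra hc
    push_neg at hc
    have hle : ∀ m : ℕ, ∃ f : ℕ → ℕ, ψ (g, m) = (Sum.inl f : (ℕ → ℕ) ⊕ ℕ) := by
      intro m
      cases hψ : ψ (g, m) with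
      | inl f => exact ⟨f, rfl⟩
      | inr n => exact absurd hψ (hc m n)
    choose f hf using hle
    set h : ℕ → ℕ := fun n => Finset.sup (Finset.range (n + 1)) (fun m => f m n) with hh
    have hinf : ∀ m : ℕ, leInf (f m) h := by
      intro m
      have hsub : Set.Ici m ⊆ {n | f m n ≤ h n} := by
        intro n hn
        simp only [Set.mem_setOf_eq, hh]
        exact Finset.le_sup (f := fun m => f m n) (Finset.mem_range.mpr (Nat.lt_succ_of_le hn))
      exact Set.Infinite.mono hsub (Set.Ici_infinite m)
    have key : ∀ m : ℕ, m ≤ (φ ((h, 0) : (ℕ → ℕ) × ℕ)).2 := by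
      intro m
      have hrel : (leInfRel.with' omegaRel).rel (ψ (g, m)) ((h, 0) : (ℕ → ℕ) × ℕ) := by
        rw [hf m]
        exact hinf m
      exact (hm (g, m) ((h, 0) : (ℕ → ℕ) × ℕ) hrel).2
    exact Nat.not_succ_le_self _ (key ((φ ((h, 0) : (ℕ → ℕ) × ℕ)).2 + 1))
  choose mg ng hng using step1
  -- Step 2: every g is ≤_∞ below some φ (0, k).1
  set h₀ : ℕ → ℕ := fun _ => 0 with hh₀
  set F : ℕ → ℕ → ℕ := fun k => (φ ((h₀, k) : (ℕ → ℕ) × ℕ)).1 with hF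
  have step2 : ∀ g : ℕ → ℕ, leInf g (F (ng g)) := by
    intro g
    have hrel : (leInfRel.with' omegaRel).rel (ψ (g, mg g)) ((h₀, ng g) : (ℕ → ℕ) × ℕ) := by
      rw [hng g]
      exact le_refl (ng g)
    exact (hm (g, mg g) ((h₀, ng g) : (ℕ → ℕ) × ℕ) hrel).1
  -- Step 3: diagonalize
  set g₀ : ℕ → ℕ := fun n => Finset.sup (Finset.range (n + 1)) (fun k => F k n) + 1 with hg₀
  have hfin : ∀ k : ℕ, ¬ leInf g₀ (F k) := by
    intro k hk
    have hsub : {n | g₀ n ≤ F k n} ⊆ Set.Iio k := by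
      intro n hn
      by_contra hlt
      simp only [Set.mem_Iio, not_lt] at hlt
      have h1 : F k n ≤ Finset.sup (Finset.range (n + 1)) (fun k => F k n) :=
        Finset.le_sup (f := fun k => F k n) (Finset.mem_range.mpr (Nat.lt_succ_of_le hlt))
      have h2 : g₀ n ≤ F k n := hn
      simp only [hg₀] at h2
      omega
    exact hk (Set.Finite.subset (Set.finite_Iio k) hsub)
  exact hfin (ng g₀) (step2 g₀)
end

section
/- The relation ((([ℕ]^{<ω})^ω)_∞, i_∞) is Tukey equivalent to (ℕ→ℕ, ≤_∞); that is, each admits a Tukey morphism to the other. -/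
open Set Topology Filter

universe u v u' v'

/-- The relation `((([ℕ]^{<ω})^ω)_∞, i_∞)`. -/
def PNatRel : TRel :=
  ⟨{F : ℕ → Finset ℕ // {n | F n ≠ ∅}.Infinite},
   {F : ℕ → Finset ℕ // {n | F n ≠ ∅}.Infinite},
   fun F G => {n | ∃ x, x ∈ F.1 n ∧ x ∈ G.1 n}.Infinite⟩

noncomputable def pickIdx (F : {F : ℕ → Finset ℕ // {n | F n ≠ ∅}.Infinite}) (n : ℕ) : ℕ :=
  (F.2.exists_gt n).choose

lemma pickIdx_gt (F : {F : ℕ → Finset ℕ // {n | F n ≠ ∅}.Infinite}) (n : ℕ) :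
    n < pickIdx F n := (F.2.exists_gt n).choose_spec.2

lemma pickIdx_ne (F : {F : ℕ → Finset ℕ // {n | F n ≠ ∅}.Infinite}) (n : ℕ) :
    F.1 (pickIdx F n) ≠ ∅ := (F.2.exists_gt n).choose_spec.1

lemma pickIdx_nonempty (F : {F : ℕ → Finset ℕ // {n | F n ≠ ∅}.Infinite}) (n : ℕ) :
    (F.1 (pickIdx F n)).Nonempty := Finset.nonempty_iff_ne_empty.2 (pickIdx_ne F n)

/-- `((([ℕ]^{<ω})^ω)_∞, i_∞)` is Tukey equivalent to `(ℕ→ℕ, ≤_∞)`. -/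
theorem PNatRel_tukeyEquiv_leInf : PNatRel.TukeyEquiv leInfRel := by
  constructor
  · -- PNatRel ≥_T leInfRel
    refine ⟨fun g => ⟨fun n => {g n}, ?_⟩, fun G n => (G.1 n).sup id, ?_⟩
    · apply Set.infinite_of_forall_exists_gt
      intro a
      exact ⟨a + 1, Finset.singleton_ne_empty _, Nat.lt_succ_self a⟩
    · intro g G h
      refine Set.Infinite.mono ?_ h
      rintro n ⟨x, hx1, hx2⟩
      simp only [Finset.mem_singleton] at hx1
      subst hx1
      exact Finset.le_sup (f := id) hx2
  · -- leInfRel ≥_T PNatRel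
    classical
    refine ⟨fun F n => max (pickIdx F n) ((F.1 (pickIdx F n)).min' (pickIdx_nonempty F n)),
      fun h => ⟨fun m => Finset.range ((Finset.range (m + 1)).sup h + 1), ?_⟩, ?_⟩
    · apply Set.infinite_of_forall_exists_gt
      intro a
      refine ⟨a + 1, ?_, Nat.lt_succ_self a⟩
      simp [Finset.range_eq_empty_iff]
    · intro F h hle
      apply Set.infinite_of_forall_exists_gt
      intro a
      obtain ⟨n, hn, han⟩ := hle.exists_gt a
      simp only [Set.mem_setOf_eq] at hn
      set m := pickIdx F n with hm
      set k := (F.1 m).min' (pickIdx_nonempty F n) with hk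
      have hmn : n < m := pickIdx_gt F n
      refine ⟨m, ⟨k, (F.1 m).min'_mem _, ?_⟩, lt_trans han hmn⟩
      rw [Finset.mem_range, Nat.lt_succ_iff]
      calc k ≤ h n := le_trans (le_max_right _ _) hn
        _ ≤ (Finset.range (m + 1)).sup h :=
          Finset.le_sup (Finset.mem_range.2 (Nat.lt_succ_of_lt hmn))
end

section
/- A separable metrizable space M is not locally compact if and only if M contains a closed copy of the metric fan 𝔽, i.e. there exists a topological embedding of 𝔽 into M whose image is closed in M. -/
open Set Topology Filter

universe u v u' v'

/-- The metric fan `𝔽`, realized as the subspace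
`{(0,0)} ∪ {(1/(n+1), 1/((n+1)(m+1))) : n, m ∈ ℕ}` of the Euclidean plane. -/
def fanSet : Set (ℝ × ℝ) :=
  {p | p = (0, 0) ∨
    ∃ n m : ℕ, p = (1 / ((n : ℝ) + 1), 1 / ((((n : ℝ) + 1)) * (((m : ℝ) + 1))))}
namespace FanProof

open Metric Filter Set Topology

/-! ### Arithmetic helpers -/

lemma le_mul4_1 {a b c d : ℝ} (ha : 0 < a) (hb : 1 ≤ b) (hc : 1 ≤ c) (hd : 1 ≤ d) :
    a ≤ a*b*c*d := by
  nlinarith [mul_nonneg (mul_nonneg ha.le (by linarith : (0:ℝ) ≤ b)) (by linarith : (0:ℝ) ≤ c),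
    mul_nonneg ha.le (by linarith : (0:ℝ) ≤ b)]

lemma le_mul4_2 {a b c d : ℝ} (ha : 0 ≤ a) (hb : 1 ≤ b) (hc : 0 ≤ c) (hd : 0 ≤ d) :
    a*(c*d) ≤ a*b*c*d := by
  nlinarith [mul_nonneg (mul_nonneg ha (sub_nonneg.2 hb)) (mul_nonneg hc hd)]

lemma one_div_inj' {a b : ℝ} (ha : 0 < a) (hb : 0 < b) (h : 1/a = 1/b) : a = b := by
  have := (div_eq_div_iff (ne_of_gt ha) (ne_of_gt hb)).1 h
  linarith

lemma gap {i j : ℕ} (h : j ≠ i) :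
    1/(((i:ℝ)+1)*((i:ℝ)+2)) ≤ |1/((j:ℝ)+1) - 1/((i:ℝ)+1)| := by
  have hi : (0:ℝ) < (i:ℝ)+1 := by positivity
  have hj : (0:ℝ) < (j:ℝ)+1 := by positivity
  rcases lt_or_gt_of_ne h with hlt | hgt
  · -- j < i, so 1/(j+1) > 1/(i+1)
    have hji : (j:ℝ)+1 ≤ (i:ℝ) := by
      have h' : j+1 ≤ i := hlt
      exact_mod_cast h'
    have hipos : (0:ℝ) < (i:ℝ) := by linarith
    have h1 : 1/((i:ℝ)) ≤ 1/((j:ℝ)+1) := one_div_le_one_div_of_le hj hji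
    have expand : 1/((i:ℝ)) - 1/((i:ℝ)+1) = 1/((i:ℝ)*((i:ℝ)+1)) := by
      field_simp; ring
    have hcomp : 1/(((i:ℝ)+1)*((i:ℝ)+2)) ≤ 1/((i:ℝ)*((i:ℝ)+1)) := by
      apply one_div_le_one_div_of_le (by positivity)
      nlinarith
    have hpos : 0 < 1/((j:ℝ)+1) - 1/((i:ℝ)+1) := by
      have : 1/((i:ℝ)+1) < 1/((i:ℝ)) := by
        apply one_div_lt_one_div_of_lt hipos; linarith
      linarith
    rw [abs_of_pos hpos]
    linarith
  · -- j > i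
    have hji : (i:ℝ)+2 ≤ (j:ℝ)+1 := by
      have h' : i+1 ≤ j := hgt
      have : (i:ℝ)+1 ≤ (j:ℝ) := by exact_mod_cast h'
      linarith
    have h1 : 1/((j:ℝ)+1) ≤ 1/((i:ℝ)+2) := one_div_le_one_div_of_le (by positivity) hji
    have expand : 1/((i:ℝ)+1) - 1/((i:ℝ)+2) = 1/(((i:ℝ)+1)*((i:ℝ)+2)) := by
      field_simp; ring
    have hpos : 0 < 1/((i:ℝ)+1) - 1/((j:ℝ)+1) := by
      have : 1/((i:ℝ)+2) < 1/((i:ℝ)+1) := by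
        apply one_div_lt_one_div_of_lt hi; linarith
      linarith
    rw [abs_sub_comm, abs_of_pos hpos]
    linarith

/-! ### Fan points -/

noncomputable section

def fanPt (n m : ℕ) : ℝ × ℝ := (1 / ((n : ℝ) + 1), 1 / ((((n : ℝ) + 1)) * (((m : ℝ) + 1))))

lemma fanPt_mem (n m : ℕ) : fanPt n m ∈ fanSet := Or.inr ⟨n, m, rfl⟩

lemma fanZero_mem : ((0, 0) : ℝ × ℝ) ∈ fanSet := Or.inl rfl

def Fz : ↥fanSet := ⟨(0, 0), fanZero_mem⟩

def Fp (n m : ℕ) : ↥fanSet := ⟨fanPt n m, fanPt_mem n m⟩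

lemma fanPt_inj {n m n' m' : ℕ} (h : fanPt n m = fanPt n' m') : n = n' ∧ m = m' := by
  have h1 := congrArg Prod.fst h
  have h2 := congrArg Prod.snd h
  simp only [fanPt] at h1 h2
  have hn : ((n:ℝ)+1) = ((n':ℝ)+1) := one_div_inj' (by positivity) (by positivity) h1
  have hnn : n = n' := by
    have : (n:ℝ) = (n':ℝ) := by linarith
    exact_mod_cast this
  subst hnn
  have hm : ((n:ℝ)+1)*((m:ℝ)+1) = ((n:ℝ)+1)*((m':ℝ)+1) :=
    one_div_inj' (by positivity) (by positivity) h2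
  have : ((m:ℝ)+1) = ((m':ℝ)+1) := by
    have hne : ((n:ℝ)+1) ≠ 0 := by positivity
    exact mul_left_cancel₀ hne hm
  have : m = m' := by
    have h'' : (m:ℝ) = (m':ℝ) := by linarith
    exact_mod_cast h''
  exact ⟨rfl, this⟩

lemma Fp_inj {n m n' m' : ℕ} (h : Fp n m = Fp n' m') : n = n' ∧ m = m' :=
  fanPt_inj (congrArg Subtype.val h)

lemma Fp_ne_Fz (n m : ℕ) : Fp n m ≠ Fz := by
  intro h
  have h1 := congrArg (fun q : ↥fanSet => (q : ℝ × ℝ).1) h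
  simp only [Fp, Fz, fanPt] at h1
  have : (0:ℝ) < 1/((n:ℝ)+1) := by positivity
  rw [h1] at this
  exact lt_irrefl _ this

lemma fan_cases (q : ↥fanSet) : q = Fz ∨ ∃ n m, q = Fp n m := by
  obtain ⟨v, hv⟩ := q
  rcases hv with h | ⟨n, m, h⟩
  · left; exact Subtype.ext h
  · right; exact ⟨n, m, Subtype.ext h⟩

lemma dist_fanPt_zero (n m : ℕ) : dist (fanPt n m) ((0:ℝ), (0:ℝ)) = 1/((n:ℝ)+1) := by
  have h1 : (0:ℝ) < (n:ℝ)+1 := by positivity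
  have h2 : (0:ℝ) < ((n:ℝ)+1)*((m:ℝ)+1) := by positivity
  simp only [fanPt, Prod.dist_eq, Real.dist_eq, sub_zero]
  rw [abs_of_pos (by positivity), abs_of_pos (by positivity)]
  apply max_eq_left
  apply one_div_le_one_div_of_le h1
  nlinarith

lemma dist_Fp_Fz (n m : ℕ) : dist (Fp n m) Fz = 1/((n:ℝ)+1) := by
  rw [Subtype.dist_eq]
  exact dist_fanPt_zero n m

/-- Each `fanPt n m` is isolated in the fan. -/
lemma fan_isolated (n m : ℕ) :
    ∃ ε > 0, ∀ q ∈ fanSet, dist q (fanPt n m) < ε → q = fanPt n m := by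
  refine ⟨1/(((n:ℝ)+1)*((n:ℝ)+2)*((m:ℝ)+1)*((m:ℝ)+2)), by positivity, ?_⟩
  have hn1 : (0:ℝ) < (n:ℝ)+1 := by positivity
  rintro q (rfl | ⟨k, m', rfl⟩) hd
  · exfalso
    have hfst : dist ((0:ℝ)) (fanPt n m).1 ≤ dist ((0,0) : ℝ×ℝ) (fanPt n m) := by
      rw [Prod.dist_eq]; exact le_max_left _ _
    have h0 : dist ((0:ℝ)) (fanPt n m).1 = 1/((n:ℝ)+1) := by
      simp only [fanPt, Real.dist_eq, zero_sub, abs_neg]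
      exact abs_of_pos (by positivity)
    have hle : 1/(((n:ℝ)+1)*((n:ℝ)+2)*((m:ℝ)+1)*((m:ℝ)+2)) ≤ 1/((n:ℝ)+1) := by
      apply one_div_le_one_div_of_le hn1
      have := le_mul4_1 (a := (n:ℝ)+1) (b := (n:ℝ)+2) (c := (m:ℝ)+1) (d := (m:ℝ)+2)
        (by positivity) (by have := Nat.cast_nonneg (α := ℝ) n; linarith)
        (by have := Nat.cast_nonneg (α := ℝ) m; linarith)
        (by have := Nat.cast_nonneg (α := ℝ) m; linarith)
      linarith

    rw [h0] at hfst
    linarith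
  · rw [show ((1:ℝ)/((k:ℝ)+1), 1/(((k:ℝ)+1)*((m':ℝ)+1))) = fanPt k m' from rfl] at hd
    by_cases hk : k = n
    · subst hk
      by_cases hm : m' = m
      · subst hm; rfl
      · exfalso
        have hsnd : dist (fanPt k m').2 (fanPt k m).2 ≤ dist (fanPt k m') (fanPt k m) := by
          rw [Prod.dist_eq]; exact le_max_right _ _
        have heq : dist (fanPt k m').2 (fanPt k m).2
            = (1/((k:ℝ)+1)) * |1/((m':ℝ)+1) - 1/((m:ℝ)+1)| := by
          simp only [fanPt, Real.dist_eq]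
          rw [← one_div_mul_one_div, ← one_div_mul_one_div, ← mul_sub, abs_mul,
            abs_of_pos (show (0:ℝ) < 1/((k:ℝ)+1) by positivity)]
        have hgap := gap (i := m) (j := m') hm
        have hfin : 1/(((k:ℝ)+1)*((k:ℝ)+2)*((m:ℝ)+1)*((m:ℝ)+2))
            ≤ (1/((k:ℝ)+1)) * (1/(((m:ℝ)+1)*((m:ℝ)+2))) := by
          rw [one_div_mul_one_div]
          apply one_div_le_one_div_of_le (by positivity)
          have := le_mul4_2 (a := (k:ℝ)+1) (b := (k:ℝ)+2) (c := (m:ℝ)+1) (d := (m:ℝ)+2)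
            (by positivity) (by have := Nat.cast_nonneg (α := ℝ) k; linarith)
            (by positivity) (by positivity)
          linarith
        have h2 : (1/((k:ℝ)+1)) * (1/(((m:ℝ)+1)*((m:ℝ)+2)))
            ≤ (1/((k:ℝ)+1)) * |1/((m':ℝ)+1) - 1/((m:ℝ)+1)| := by
          apply mul_le_mul_of_nonneg_left hgap (by positivity)
        rw [heq] at hsnd
        linarith
    · exfalso
      have hfst : dist (fanPt k m').1 (fanPt n m).1 ≤ dist (fanPt k m') (fanPt n m) := by
        rw [Prod.dist_eq]; exact le_max_left _ _
      have heq : dist (fanPt k m').1 (fanPt n m).1 = |1/((k:ℝ)+1) - 1/((n:ℝ)+1)| := by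
        simp only [fanPt, Real.dist_eq]
      have hgap := gap (i := n) (j := k) hk
      have hfin : 1/(((n:ℝ)+1)*((n:ℝ)+2)*((m:ℝ)+1)*((m:ℝ)+2))
          ≤ 1/(((n:ℝ)+1)*((n:ℝ)+2)) := by
        apply one_div_le_one_div_of_le (by positivity)
        have h1 : (1:ℝ) ≤ ((m:ℝ)+1)*((m:ℝ)+2) := by nlinarith [Nat.cast_nonneg (α := ℝ) m]
        nlinarith [mul_pos (show (0:ℝ) < (n:ℝ)+1 by positivity) (show (0:ℝ) < (n:ℝ)+2 by positivity)]
      rw [heq] at hfst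
      linarith

/-- Basic neighborhoods of the fan apex. -/
def fanU (N : ℕ) : Set ↥fanSet := {q | q = Fz ∨ ∃ n m, N ≤ n ∧ q = Fp n m}

lemma fanU_mem_nhds (N : ℕ) : fanU N ∈ 𝓝 Fz := by
  rw [Metric.mem_nhds_iff]
  refine ⟨1/((N:ℝ)+1), by positivity, ?_⟩
  intro q hq
  rcases fan_cases q with rfl | ⟨n, m, rfl⟩
  · exact Or.inl rfl
  · refine Or.inr ⟨n, m, ?_, rfl⟩
    rw [Metric.mem_ball, dist_Fp_Fz] at hq
    have hNn : (N:ℝ)+1 < (n:ℝ)+1 := by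
      have hn : (0:ℝ) < (n:ℝ)+1 := by positivity
      by_contra hcon
      push_neg at hcon
      have := one_div_le_one_div_of_le hn hcon
      linarith
    have : N < n := by exact_mod_cast (by linarith : (N:ℝ) < (n:ℝ))
    exact this.le

lemma exists_fanU_subset {s : Set ↥fanSet} (hs : s ∈ 𝓝 Fz) : ∃ N, fanU N ⊆ s := by
  rcases Metric.mem_nhds_iff.1 hs with ⟨ε, hε, hball⟩
  obtain ⟨N, hN⟩ := exists_nat_one_div_lt hε
  refine ⟨N, fun q hq => hball ?_⟩
  rcases hq with rfl | ⟨n, m, hn, rfl⟩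
  · simpa [Metric.mem_ball] using hε
  · rw [Metric.mem_ball, dist_Fp_Fz]
    have h1 : 1/((n:ℝ)+1) ≤ 1/((N:ℝ)+1) := by
      apply one_div_le_one_div_of_le (by positivity)
      have : (N:ℝ) ≤ (n:ℝ) := by exact_mod_cast hn
      linarith
    linarith

/-- The fan has no compact neighborhood at the apex. -/
lemma fan_not_lc (K : Set ↥fanSet) (hK : IsCompact K) : K ∉ 𝓝 Fz := by
  intro hmem
  obtain ⟨ε, hε, hball⟩ := Metric.mem_nhds_iff.1 hmem
  obtain ⟨n, hn⟩ := exists_nat_one_div_lt hε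
  have hsp : ∀ m, Fp n m ∈ K := by
    intro m
    apply hball
    rw [Metric.mem_ball, dist_Fp_Fz]
    exact hn
  have hKc : IsCompact (Subtype.val '' K) := hK.image continuous_subtype_val
  have hcl : IsClosed (Subtype.val '' K) := hKc.isClosed
  have htd : Tendsto (fun m : ℕ => fanPt n m) atTop (𝓝 (1/((n:ℝ)+1), 0)) := by
    apply Tendsto.prodMk_nhds tendsto_const_nhds
    have h2 : Tendsto (fun m : ℕ => (1/((n:ℝ)+1)) * (1/((m:ℝ)+1))) atTop (𝓝 0) := by
      simpa using tendsto_one_div_add_atTop_nhds_zero_nat.const_mul (1/((n:ℝ)+1))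
    have heqf : (fun m : ℕ => 1/(((n:ℝ)+1)*((m:ℝ)+1)))
        = fun m : ℕ => (1/((n:ℝ)+1)) * (1/((m:ℝ)+1)) := by
      funext m; rw [one_div_mul_one_div]
    rw [heqf]
    exact h2
  have hLmem : ((1/((n:ℝ)+1), (0:ℝ)) : ℝ × ℝ) ∈ Subtype.val '' K :=
    hcl.mem_of_tendsto htd (Eventually.of_forall fun m => ⟨Fp n m, hsp m, rfl⟩)
  obtain ⟨q, _, hq⟩ := hLmem
  have hmemfan : ((1/((n:ℝ)+1), (0:ℝ)) : ℝ × ℝ) ∈ fanSet := hq ▸ q.2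
  rcases hmemfan with h | ⟨k, m, h⟩
  · have h1 := congrArg Prod.fst h
    simp only at h1
    have : (0:ℝ) < 1/((n:ℝ)+1) := by positivity
    rw [h1] at this
    exact lt_irrefl _ this
  · have h2 := congrArg Prod.snd h
    simp only at h2
    have : (0:ℝ) < 1/(((k:ℝ)+1)*((m:ℝ)+1)) := by positivity
    rw [← h2] at this
    exact lt_irrefl _ this

end

end FanProof
namespace FanProof

section MetricSide

open Metric Filter Set Topology

variable {M : Type*} [MetricSpace M]

lemma sep_radius {A : Set M} (h : ∀ a, ¬AccPt a (𝓟 A)) (b : M) :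
    ∃ ε > 0, ∀ a ∈ A, a ≠ b → ε ≤ dist b a := by
  have hb : 𝓝[≠] b ⊓ 𝓟 A = ⊥ := not_neBot.1 (h b)
  rw [inf_principal_eq_bot] at hb
  rcases Metric.mem_nhdsWithin_iff.1 hb with ⟨ε, hε, hsub⟩
  refine ⟨ε, hε, fun a ha hab => ?_⟩
  by_contra hlt
  push_neg at hlt
  exact hsub ⟨by rwa [Metric.mem_ball, dist_comm], hab⟩ ha

lemma exists_pos_min (g : ℕ → ℝ) (hg : ∀ k, 0 < g k) (N : ℕ) :
    ∃ ε > 0, ∀ k < N, ε ≤ g k := by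
  induction N with
  | zero => exact ⟨1, one_pos, fun k hk => absurd hk (Nat.not_lt_zero k)⟩
  | succ N ih =>
    obtain ⟨ε, hε, h⟩ := ih
    refine ⟨min ε (g N), lt_min hε (hg N), fun k hk => ?_⟩
    rcases Nat.lt_succ_iff_lt_or_eq.1 hk with hk' | rfl
    · exact le_trans (min_le_left _ _) (h k hk')
    · exact min_le_right _ _

lemma exists_discrete_set (x : M) {r : ℝ} (hr : 0 < r)
    (hnc : ¬IsCompact (Metric.closedBall x r)) :
    ∃ A : Set M, A ⊆ Metric.closedBall x r ∧ A.Infinite ∧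
      (∀ a, ¬AccPt a (𝓟 A)) ∧ x ∉ A := by
  have hns : ¬IsSeqCompact (Metric.closedBall x r) := fun h => hnc h.isCompact
  rw [IsSeqCompact] at hns
  push_neg at hns
  obtain ⟨u, hu, hcon⟩ := hns
  have hclus : ∀ a, ¬MapClusterPt a atTop u := by
    intro a ha
    by_cases hmem : a ∈ Metric.closedBall x r
    · obtain ⟨ψ, hψ, ht⟩ := TopologicalSpace.FirstCountableTopology.tendsto_subseq ha
      exact hcon a hmem ψ hψ ht
    · rw [Metric.mem_closedBall, not_le] at hmem
      have hb : Metric.ball a (dist a x - r) ∈ 𝓝 a := Metric.ball_mem_nhds a (by linarith)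
      obtain ⟨n, hn⟩ := ((mapClusterPt_iff_frequently.1 ha) _ hb).exists
      rw [Metric.mem_ball] at hn
      have h1 : dist (u n) x ≤ r := hu n
      have h2 : dist a x ≤ dist a (u n) + dist (u n) x := dist_triangle a (u n) x
      rw [dist_comm a (u n)] at h2
      linarith
  have hfib : ∀ a : M, (u ⁻¹' {a}).Finite := by
    intro a
    by_contra hf
    apply hclus a
    rw [mapClusterPt_iff_frequently]
    intro s hs
    rw [Nat.frequently_atTop_iff_infinite]
    have hf' : (u ⁻¹' {a}).Infinite := hf
    exact hf'.mono (fun n hn => by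
      have : u n = a := hn
      rw [Set.mem_setOf_eq, this]
      exact mem_of_mem_nhds hs)
  have hrange : (Set.range u).Infinite := by
    by_contra hfin
    rw [Set.not_infinite] at hfin
    have hcover : (Set.univ : Set ℕ) ⊆ ⋃ a ∈ Set.range u, u ⁻¹' {a} := by
      intro n _
      exact Set.mem_biUnion (Set.mem_range_self n) rfl
    exact Set.infinite_univ (Set.Finite.subset (hfin.biUnion fun a _ => hfib a) hcover)
  refine ⟨Set.range u \ {x}, ?_, ?_, ?_, ?_⟩
  · rintro a ⟨⟨n, rfl⟩, _⟩
    exact hu n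
  · exact hrange.diff (Set.finite_singleton x)
  · intro a hacc
    apply hclus a
    rw [mapClusterPt_iff_frequently]
    intro s hs
    rw [Nat.frequently_atTop_iff_infinite]
    by_contra hfin
    rw [Set.not_infinite] at hfin
    have hF : (u '' {n | u n ∈ s}).Finite := hfin.image u
    have hW : s ∩ (u '' {n | u n ∈ s} \ {a})ᶜ ∈ 𝓝 a := by
      apply Filter.inter_mem hs
      apply IsOpen.mem_nhds (hF.diff (t := {a})).isClosed.isOpen_compl
      intro hmem
      exact hmem.2 rfl
    have hacc' : NeBot (𝓝[≠] a ⊓ 𝓟 (Set.range u \ {x})) := hacc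
    have hmem1 : s ∩ (u '' {n | u n ∈ s} \ {a})ᶜ ∈ 𝓝[≠] a := mem_nhdsWithin_of_mem_nhds hW
    have hmem2 : ({a}ᶜ : Set M) ∈ 𝓝[≠] a := self_mem_nhdsWithin
    have hmem3 : (Set.range u \ {x}) ∈ 𝓟 (Set.range u \ {x}) := Filter.mem_principal_self _
    have hne := hacc'.nonempty_of_mem
      (Filter.inter_mem_inf (Filter.inter_mem hmem1 hmem2) hmem3)
    obtain ⟨b, ⟨⟨hbs, hbF⟩, hba⟩, ⟨n, rfl⟩, _⟩ := hne
    exact hbF ⟨Set.mem_image_of_mem u hbs, hba⟩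
  · rintro ⟨_, hx2⟩
    exact hx2 rfl

structure FanStage (x : M) (n : ℕ) where
  r : ℝ
  A : Set M
  d : ℝ
  hr0 : 0 < r
  hrle : r ≤ (1/2 : ℝ) ^ n
  hsub : A ⊆ Metric.closedBall x r
  hinf : A.Infinite
  hacc : ∀ a, ¬AccPt a (𝓟 A)
  hxA : x ∉ A
  hd0 : 0 < d
  hdsep : ∀ a ∈ A, d ≤ dist x a

noncomputable def mkStage (x : M) (H : ∀ r > 0, ¬IsCompact (Metric.closedBall x r))
    {r : ℝ} (hr0 : 0 < r) (n : ℕ) (hrle : r ≤ (1/2 : ℝ) ^ n) : FanStage x n :=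
  let h := exists_discrete_set x hr0 (H r hr0)
  let hsep := sep_radius h.choose_spec.2.2.1 x
  { r := r
    A := h.choose
    d := hsep.choose
    hr0 := hr0
    hrle := hrle
    hsub := h.choose_spec.1
    hinf := h.choose_spec.2.1
    hacc := h.choose_spec.2.2.1
    hxA := h.choose_spec.2.2.2
    hd0 := hsep.choose_spec.1
    hdsep := fun a ha => hsep.choose_spec.2 a ha
      (fun he => h.choose_spec.2.2.2 (he ▸ ha)) }

noncomputable def fanStage (x : M) (H : ∀ r > 0, ¬IsCompact (Metric.closedBall x r)) :
    ∀ n, FanStage x n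
  | 0 => mkStage x H one_pos 0 (by norm_num)
  | (n+1) =>
    let s := fanStage x H n
    mkStage x H (r := min (s.r/2) (s.d/2))
      (lt_min (by linarith [s.hr0]) (by linarith [s.hd0])) (n+1)
      (by
        have h1 : min (s.r/2) (s.d/2) ≤ s.r/2 := min_le_left _ _
        have h2 := s.hrle
        have h3 : (1/2 : ℝ)^(n+1) = (1/2 : ℝ)^n / 2 := by ring
        rw [h3]
        linarith)

lemma fanStage_succ_r (x : M) (H : ∀ r > 0, ¬IsCompact (Metric.closedBall x r)) (n : ℕ) :
    (fanStage x H (n+1)).r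
      = min ((fanStage x H n).r/2) ((fanStage x H n).d/2) := by
  rw [fanStage]
  rfl

lemma fanStage_r_mono (x : M) (H : ∀ r > 0, ¬IsCompact (Metric.closedBall x r))
    {n k : ℕ} (h : n ≤ k) : (fanStage x H k).r ≤ (fanStage x H n).r := by
  induction h with
  | refl => exact le_refl _
  | @step m h' ih =>
    have h1 : (fanStage x H (m+1)).r ≤ (fanStage x H m).r / 2 := by
      rw [fanStage_succ_r]
      exact min_le_left _ _
    have h2 := (fanStage x H m).hr0
    linarith

lemma fanStage_ne (x : M) (H : ∀ r > 0, ¬IsCompact (Metric.closedBall x r))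
    {n k : ℕ} (h : n < k) {a b : M} (ha : a ∈ (fanStage x H k).A)
    (hb : b ∈ (fanStage x H n).A) : a ≠ b := by
  have h1 : dist x a ≤ (fanStage x H k).r := by
    have := (fanStage x H k).hsub ha
    rw [Metric.mem_closedBall, dist_comm] at this
    exact this
  have h2 : (fanStage x H k).r ≤ (fanStage x H (n+1)).r := fanStage_r_mono x H h
  have h3 : (fanStage x H (n+1)).r ≤ (fanStage x H n).d / 2 := by
    rw [fanStage_succ_r]
    exact min_le_right _ _
  have h4 := (fanStage x H n).hdsep b hb
  have hd0 := (fanStage x H n).hd0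
  intro he
  rw [he] at h1
  linarith

end MetricSide

end FanProof
open FanProof in
/-- a separable metrizable space is not locally compact iff it
contains a closed copy of the metric fan. -/
theorem not_locallyCompact_iff_closed_fan (M : Type*) [TopologicalSpace M]
    [TopologicalSpace.MetrizableSpace M] [TopologicalSpace.SeparableSpace M] :
    ¬WeaklyLocallyCompactSpace M ↔
      ∃ e : ↥fanSet → M, Topology.IsEmbedding e ∧ IsClosed (Set.range e) := by
  constructor
  · intro hnl
    letI : MetricSpace M := TopologicalSpace.metrizableSpaceMetric M
    classical
    have hex : ∃ x : M, ∀ K : Set M, IsCompact K → K ∉ 𝓝 x := by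
      by_contra hcon
      push_neg at hcon
      exact hnl ⟨fun x => hcon x⟩
    obtain ⟨x, hx⟩ := hex
    have H : ∀ r > 0, ¬IsCompact (Metric.closedBall x r) := fun r hr hc =>
      hx _ hc (Metric.closedBall_mem_nhds x hr)
    let Y : ℕ → ℕ → M := fun n m => ((fanStage x H n).hinf.natEmbedding _ m : M)
    have hYA : ∀ n m, Y n m ∈ (fanStage x H n).A :=
      fun n m => ((fanStage x H n).hinf.natEmbedding _ m).2
    have hYx : ∀ n m, Y n m ≠ x := fun n m h =>
      (fanStage x H n).hxA (by have hm := hYA n m; rw [h] at hm; exact hm)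
    have hYinj : ∀ n m n' m', Y n m = Y n' m' → n = n' ∧ m = m' := by
      intro n m n' m' h
      rcases lt_trichotomy n n' with hlt | rfl | hgt
      · exact absurd h.symm (fanStage_ne x H hlt (hYA n' m') (hYA n m))
      · refine ⟨rfl, ?_⟩
        have h' : ((fanStage x H n).hinf.natEmbedding _) m
            = ((fanStage x H n).hinf.natEmbedding _) m' := Subtype.coe_injective h
        exact ((fanStage x H n).hinf.natEmbedding _).injective h'
      · exact absurd h (fanStage_ne x H hgt (hYA n m) (hYA n' m'))
    have hYd : ∀ n m, dist (Y n m) x ≤ (fanStage x H n).r :=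
      fun n m => Metric.mem_closedBall.1 ((fanStage x H n).hsub (hYA n m))
    let e : ↥fanSet → M := fun q =>
      if h : ∃ n' m', q = Fp n' m' then Y h.choose h.choose_spec.choose else x
    have heFz : e Fz = x := by
      simp only [e]
      rw [dif_neg]
      rintro ⟨n, m, h⟩
      exact Fp_ne_Fz n m h.symm
    have heFp : ∀ n m, e (Fp n m) = Y n m := by
      intro n m
      have hpf : ∃ n' m', Fp n m = Fp n' m' := ⟨n, m, rfl⟩
      simp only [e]
      rw [dif_pos hpf]
      obtain ⟨h1, h2⟩ := Fp_inj hpf.choose_spec.choose_spec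
      exact (congrArg₂ Y h1 h2).symm
    have heinj : Function.Injective e := by
      intro q q' h
      rcases fan_cases q with rfl | ⟨n, m, rfl⟩ <;> rcases fan_cases q' with rfl | ⟨n', m', rfl⟩
      · rfl
      · rw [heFz, heFp] at h
        exact absurd h.symm (hYx n' m')
      · rw [heFz, heFp] at h
        exact absurd h (hYx n m)
      · rw [heFp, heFp] at h
        obtain ⟨h1, h2⟩ := hYinj _ _ _ _ h
        rw [h1, h2]
    have hgex : ∀ (b : M) (k : ℕ),
        ∃ ε > 0, ∀ a ∈ (fanStage x H k).A, a ≠ b → ε ≤ dist b a :=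
      fun b k => sep_radius (fanStage x H k).hacc b
    choose g hg0 hgs using hgex
    have hM2 : ∀ ε > 0, ∃ N : ℕ, ∀ n, N ≤ n → ∀ m, dist (Y n m) x < ε := by
      intro ε hε
      obtain ⟨N, hN⟩ := exists_pow_lt_of_lt_one hε (by norm_num : (1/2 : ℝ) < 1)
      refine ⟨N, fun n hn m => ?_⟩
      have h1 := hYd n m
      have h2 := (fanStage x H n).hrle
      have h3 : ((1:ℝ)/2)^n ≤ ((1:ℝ)/2)^N :=
        pow_le_pow_of_le_one (by norm_num) (by norm_num) hn
      linarith
    have hM3 : ∀ N : ℕ, ∃ ε > 0, ∀ n m, dist (Y n m) x < ε → N ≤ n := by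
      intro N
      obtain ⟨ε, hε, hlt⟩ := exists_pos_min (fun k => (fanStage x H k).d)
        (fun k => (fanStage x H k).hd0) N
      refine ⟨ε, hε, fun n m hd => ?_⟩
      by_contra hn
      push_neg at hn
      have h1 := (fanStage x H n).hdsep _ (hYA n m)
      rw [dist_comm] at hd
      linarith [hlt n hn]
    have hM1 : ∀ n m, ∃ ε > 0, ∀ q : ↥fanSet, dist (e q) (Y n m) < ε → q = Fp n m := by
      intro n m
      have hδ : 0 < dist x (Y n m) := dist_pos.2 (Ne.symm (hYx n m))
      obtain ⟨N, hN⟩ := exists_pow_lt_of_lt_one (show 0 < dist x (Y n m)/2 by linarith)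
        (by norm_num : (1/2 : ℝ) < 1)
      obtain ⟨ε₀, hε₀, hε₀s⟩ := exists_pos_min (fun k => g (Y n m) k)
        (fun k => hg0 (Y n m) k) N
      refine ⟨min ε₀ (dist x (Y n m)/2), lt_min hε₀ (by linarith), fun q hq => ?_⟩
      rcases fan_cases q with rfl | ⟨n', m', rfl⟩
      · exfalso
        rw [heFz] at hq
        have := lt_of_lt_of_le hq (min_le_right _ _)
        linarith
      · rw [heFp] at hq
        by_cases hnm : n' = n ∧ m' = m
        · rw [hnm.1, hnm.2]
        · exfalso
          have hne : Y n' m' ≠ Y n m := fun hh => hnm (hYinj _ _ _ _ hh)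
          by_cases hN' : N ≤ n'
          · have h1 : dist (Y n' m') x ≤ ((1:ℝ)/2)^N :=
              le_trans (hYd n' m') (le_trans (fanStage x H n').hrle
                (pow_le_pow_of_le_one (by norm_num) (by norm_num) hN'))
            have h2 : dist x (Y n m) ≤ dist x (Y n' m') + dist (Y n' m') (Y n m) :=
              dist_triangle _ _ _
            rw [dist_comm x (Y n' m')] at h2
            have h3 := lt_of_lt_of_le hq (min_le_right _ _)
            linarith
          · push_neg at hN'
            have h1 := hgs (Y n m) n' _ (hYA n' m') hne
            have h2 := hε₀s n' hN'
            rw [dist_comm] at h1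
            have h3 := lt_of_lt_of_le hq (min_le_left _ _)
            linarith
    have hrange : Set.range e = insert x (⋃ n, Set.range (Y n)) := by
      ext c
      constructor
      · rintro ⟨q, rfl⟩
        rcases fan_cases q with rfl | ⟨n, m, rfl⟩
        · rw [heFz]
          exact Set.mem_insert _ _
        · rw [heFp]
          exact Set.mem_insert_of_mem _ (Set.mem_iUnion.2 ⟨n, ⟨m, rfl⟩⟩)
      · rintro (rfl | hc)
        · exact ⟨Fz, heFz⟩
        · obtain ⟨n, hn⟩ := Set.mem_iUnion.1 hc
          obtain ⟨m, rfl⟩ := hn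
          exact ⟨Fp n m, heFp n m⟩
    have hclosed : IsClosed (Set.range e) := by
      rw [← isOpen_compl_iff, Metric.isOpen_iff]
      intro c hc
      rw [Set.mem_compl_iff, hrange] at hc
      simp only [Set.mem_insert_iff, Set.mem_iUnion, Set.mem_range, not_or, not_exists] at hc
      obtain ⟨hcx, hcY⟩ := hc
      have hδ : 0 < dist c x := dist_pos.2 hcx
      obtain ⟨N, hN⟩ := exists_pow_lt_of_lt_one (show 0 < dist c x/2 by linarith)
        (by norm_num : (1/2 : ℝ) < 1)
      obtain ⟨ε₀, hε₀, hε₀s⟩ := exists_pos_min (fun k => g c k) (fun k => hg0 c k) N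
      refine ⟨min ε₀ (dist c x/2), lt_min hε₀ (by linarith), ?_⟩
      intro w hw
      rw [Metric.mem_ball] at hw
      rw [Set.mem_compl_iff, hrange]
      simp only [Set.mem_insert_iff, Set.mem_iUnion, Set.mem_range, not_or, not_exists]
      constructor
      · intro hwx
        rw [hwx] at hw
        have h3 := lt_of_lt_of_le hw (min_le_right _ _)
        rw [dist_comm] at h3
        have h4 : (0:ℝ) ≤ dist c x := dist_nonneg
        linarith
      · intro n m hwy
        rw [← hwy] at hw
        by_cases hN' : N ≤ n
        · have h1 : dist (Y n m) x ≤ ((1:ℝ)/2)^N :=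
            le_trans (hYd n m) (le_trans (fanStage x H n).hrle
              (pow_le_pow_of_le_one (by norm_num) (by norm_num) hN'))
          have h2 : dist c x ≤ dist c (Y n m) + dist (Y n m) x := dist_triangle _ _ _
          rw [dist_comm c (Y n m)] at h2
          have h3 := lt_of_lt_of_le hw (min_le_right _ _)
          linarith
        · push_neg at hN'
          have h1 := hgs c n _ (hYA n m) (hcY n m)
          have h2 := hε₀s n hN'
          rw [dist_comm] at h1
          have h3 := lt_of_lt_of_le hw (min_le_left _ _)
          linarith
    have hind : ∀ q : ↥fanSet, 𝓝 q = Filter.comap e (𝓝 (e q)) := by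
      intro q
      rcases fan_cases q with rfl | ⟨n, m, rfl⟩
      · rw [heFz]
        apply le_antisymm
        · rw [← Filter.map_le_iff_le_comap]
          intro V hV
          rw [Filter.mem_map]
          rcases Metric.mem_nhds_iff.1 hV with ⟨ε, hε, hball⟩
          obtain ⟨N, hM2N⟩ := hM2 ε hε
          apply Filter.mem_of_superset (fanU_mem_nhds N)
          rintro q (rfl | ⟨n, m, hn, rfl⟩)
          · rw [Set.mem_preimage, heFz]
            exact hball (Metric.mem_ball_self hε)
          · rw [Set.mem_preimage, heFp]
            exact hball (by rw [Metric.mem_ball]; exact hM2N n hn m)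
        · intro s hs
          rw [Filter.mem_comap]
          obtain ⟨N, hUN⟩ := exists_fanU_subset hs
          obtain ⟨ε, hε, hM3N⟩ := hM3 N
          refine ⟨Metric.ball x ε, Metric.ball_mem_nhds x hε, ?_⟩
          intro q hq
          rw [Set.mem_preimage, Metric.mem_ball] at hq
          apply hUN
          rcases fan_cases q with rfl | ⟨n, m, rfl⟩
          · exact Or.inl rfl
          · rw [heFp] at hq
            exact Or.inr ⟨n, m, hM3N n m hq, rfl⟩
      · have hpure : 𝓝 (Fp n m) = pure (Fp n m) := by
          rw [← isOpen_singleton_iff_nhds_eq_pure, Metric.isOpen_iff]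
          rintro q rfl
          obtain ⟨ε, hε, hiso⟩ := fan_isolated n m
          refine ⟨ε, hε, ?_⟩
          intro q' hq'
          rw [Metric.mem_ball, Subtype.dist_eq] at hq'
          exact Subtype.ext (hiso q'.1 q'.2 hq')
        rw [hpure]
        apply le_antisymm
        · rw [← Filter.map_le_iff_le_comap, Filter.map_pure]
          exact pure_le_nhds _
        · obtain ⟨ε, hε, hsep'⟩ := hM1 n m
          intro s hs
          rw [Filter.mem_pure] at hs
          rw [Filter.mem_comap]
          refine ⟨Metric.ball (e (Fp n m)) ε, Metric.ball_mem_nhds _ hε, ?_⟩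
          intro q hq
          rw [Set.mem_preimage, Metric.mem_ball, heFp n m] at hq
          have hqe : q = Fp n m := hsep' q hq
          rw [hqe]
          exact hs
    exact ⟨e, (Topology.isEmbedding_iff _).2 ⟨Topology.isInducing_iff_nhds.2 hind, heinj⟩, hclosed⟩
  · rintro ⟨e, he, hcl⟩ hW
    obtain ⟨K, hK, hKn⟩ := hW.exists_compact_mem_nhds (e Fz)
    have hce : Topology.IsClosedEmbedding e := ⟨he, hcl⟩
    exact fan_not_lc _ (hce.isCompact_preimage hK)
      (he.continuous.continuousAt.preimage_mem_nhds hKn)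
end

section
/- Let M be a separable metrizable space whose set M′ of non-isolated points is not compact. Then 𝐤(M) ≥_T 𝐤𝐜(M), i.e. there is a Tukey morphism from the relation (CS(M), K(M), ̸⊥) to the relation (M, K(M), ∈). -/
open Set Topology Filter

universe u v u' v'

lemma exists_onePoint_embedding {M : Type*} [MetricSpace M] {p : M}
    (hp : ¬IsOpen ({p} : Set M)) :
    ∃ e : OnePoint ℕ → M, Topology.IsEmbedding e ∧ e OnePoint.infty = p := by
  classical
  have hpts : ∀ ε : ℝ, 0 < ε → ∃ z : M, z ≠ p ∧ dist z p < ε := by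
    intro ε hε
    by_contra hc
    push_neg at hc
    apply hp
    have hball : ({p} : Set M) = Metric.ball p ε := by
      ext z
      simp only [Set.mem_singleton_iff, Metric.mem_ball]
      constructor
      · rintro rfl; simpa using hε
      · intro hz; by_contra hne; exact absurd hz (not_lt.2 (hc z hne))
    rw [hball]; exact Metric.isOpen_ball
  choose f hf1 hf2 using hpts
  let Y : ℕ → {z : M // z ≠ p} := fun n =>
    Nat.rec ⟨f 1 one_pos, hf1 1 one_pos⟩
      (fun n y => ⟨f (min (dist y.1 p) ((1/2 : ℝ)^(n+1)))
          (lt_min (dist_pos.2 y.2) (by positivity)),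
        hf1 _ _⟩) n
  have hYstep : ∀ n, dist (Y (n+1)).1 p < min (dist (Y n).1 p) ((1/2 : ℝ)^(n+1)) :=
    fun n => hf2 _ _
  have hYbound : ∀ n, dist (Y n).1 p < (1/2 : ℝ)^n := by
    intro n
    cases n with
    | zero => exact (hf2 1 one_pos).trans_le (by norm_num)
    | succ n => exact lt_of_lt_of_le (hYstep n) (min_le_right _ _)
  have hanti : StrictAnti (fun n => dist (Y n).1 p) :=
    strictAnti_nat_of_succ_lt fun n => lt_of_lt_of_le (hYstep n) (min_le_left _ _)
  have hYinj : Function.Injective (fun n => (Y n).1) := by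
    intro m n hmn
    by_contra hne
    have : dist (Y m).1 p ≠ dist (Y n).1 p := fun hd => hne (hanti.injective hd)
    simp only at hmn
    exact this (by rw [hmn])
  have htend : Tendsto (fun n => (Y n).1) atTop (𝓝 p) := by
    rw [tendsto_iff_dist_tendsto_zero]
    apply squeeze_zero (fun n => dist_nonneg) (fun n => (hYbound n).le)
    exact tendsto_pow_atTop_nhds_zero_of_lt_one (by norm_num) (by norm_num)
  refine ⟨fun z => z.elim p (fun n => (Y n).1), ?_, rfl⟩
  have hcont : Continuous (fun z : OnePoint ℕ => z.elim p (fun n => (Y n).1)) := by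
    rw [OnePoint.continuous_iff_from_nat]
    exact htend
  have hinj : Function.Injective (fun z : OnePoint ℕ => z.elim p (fun n => (Y n).1)) := by
    intro a b hab
    match a, b with
    | Option.none, Option.none => rfl
    | Option.none, Option.some n => exact absurd hab.symm (Y n).2
    | Option.some m, Option.none => exact absurd hab (Y m).2
    | Option.some m, Option.some n => exact congrArg _ (hYinj hab)
  exact (hcont.isClosedEmbedding hinj).toIsEmbedding

/-- if `M` is separable metrizable and its set of non-isolated
points is not compact, then `𝐤(M) ≥_T 𝐤𝐜(M)`. -/
theorem kRel_tukey_kcRel (M : Type u) [TopologicalSpace M]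
    [TopologicalSpace.MetrizableSpace M] [TopologicalSpace.SeparableSpace M]
    (h : ¬IsCompact (nonIsolated M)) :
    (kRel M).Tukey (kcRel M) := by
  classical
  letI : MetricSpace M := TopologicalSpace.metrizableSpaceMetric M
  -- `nonIsolated M` is closed
  have hclosed : IsClosed (nonIsolated M) := by
    rw [← isOpen_compl_iff, isOpen_iff_mem_nhds]
    intro x hx
    simp only [nonIsolated, mem_compl_iff, mem_setOf_eq, not_not] at hx
    filter_upwards [hx.mem_nhds rfl] with y hy
    simp only [mem_singleton_iff] at hy
    subst hy
    simp only [nonIsolated, mem_compl_iff, mem_setOf_eq, not_not]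
    exact hx
  -- a sequence in `nonIsolated M` with no convergent subsequence
  have hseq : ¬IsSeqCompact (nonIsolated M) := fun hs => h hs.isCompact
  unfold IsSeqCompact at hseq
  push_neg at hseq
  obtain ⟨u, hu_mem, hu⟩ := hseq
  -- every compact set contains only finitely many terms of `u`
  have hfin : ∀ K : Set M, IsCompact K → {n | u n ∈ K}.Finite := by
    intro K hK
    by_contra hinf
    rw [← Set.not_infinite, not_not] at hinf
    haveI : Infinite ({n | u n ∈ K} : Set ℕ) := hinf.to_subtype
    let σ := Nat.orderEmbeddingOfSet {n | u n ∈ K}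
    have hσmem : ∀ n, (u ∘ σ) n ∈ K := by
      intro n
      have : σ n ∈ {n | u n ∈ K} := by
        rw [← Nat.orderEmbeddingOfSet_range {n | u n ∈ K}]
        exact ⟨n, rfl⟩
      exact this
    obtain ⟨a, _, φ, hφ, hconv⟩ := hK.tendsto_subseq hσmem
    have haM : a ∈ nonIsolated M :=
      hclosed.mem_of_tendsto hconv (Eventually.of_forall fun n => hu_mem _)
    exact hu a haM (σ ∘ φ) (σ.strictMono.comp hφ) hconv
  -- an embedding of `ω+1` converging to each non-isolated point
  have hemb : ∀ p ∈ nonIsolated M, ∃ e : OnePoint ℕ → M,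
      Topology.IsEmbedding e ∧ e OnePoint.infty = p := by
    intro p hp
    exact exists_onePoint_embedding hp
  choose E hE1 hE2 using hemb
  -- the isolated points form a countable set
  have hIc : Set.Countable {x : M | x ∉ nonIsolated M} := by
    obtain ⟨s, hsc, hsd⟩ := TopologicalSpace.exists_countable_dense M
    apply hsc.mono
    intro x hx
    simp only [mem_setOf_eq, nonIsolated, not_not] at hx
    obtain ⟨y, hy1, hy2⟩ := hsd.inter_open_nonempty _ hx ⟨x, rfl⟩
    rw [mem_singleton_iff] at hy1
    exact hy1 ▸ hy2
  obtain ⟨j, hj⟩ := Set.countable_iff_exists_injective.mp hIc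
  -- the limit point assigned to each point of `M`
  set pfun : M → M := fun x =>
    if hx : x ∈ nonIsolated M then x else u (j ⟨x, hx⟩) with hpfun
  have hpmem : ∀ x, pfun x ∈ nonIsolated M := by
    intro x
    by_cases hx : x ∈ nonIsolated M
    · rw [hpfun]; simpa only [dif_pos hx]
    · rw [hpfun]; simp only [dif_neg hx]; exact hu_mem _
  -- the map ψ
  set ψ : M → ↥(CS M) := fun x =>
    ⟨E (pfun x) (hpmem x) '' Set.range ((↑) : ℕ → OnePoint ℕ),
      ⟨E (pfun x) (hpmem x), hE1 _ _, rfl⟩⟩ with hψ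
  -- the map φ
  have hextra : ∀ K : {K : Set M // IsCompact K},
      Set.Finite {x : M | ∃ hx : x ∉ nonIsolated M, u (j ⟨x, hx⟩) ∈ K.1} := by
    intro K
    set extra := {x : M | ∃ hx : x ∉ nonIsolated M, u (j ⟨x, hx⟩) ∈ K.1} with hex
    set f : M → ℕ := fun x => if hx : x ∉ nonIsolated M then j ⟨x, hx⟩ else 0 with hf
    have himg : f '' extra ⊆ {n | u n ∈ K.1} := by
      rintro - ⟨x, ⟨hx, hxK⟩, rfl⟩
      rw [hf]
      simp only [dif_pos hx]
      exact hxK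
    have hinjOn : Set.InjOn f extra := by
      rintro x ⟨hx, -⟩ y ⟨hy, -⟩ hxy
      rw [hf] at hxy
      simp only [dif_pos hx, dif_pos hy] at hxy
      exact congrArg Subtype.val (hj hxy)
    exact Set.Finite.of_finite_image ((hfin K.1 K.2).subset himg) hinjOn
  set Φ : {K : Set M // IsCompact K} → {K : Set M // IsCompact K} := fun K =>
    ⟨K.1 ∪ {x : M | ∃ hx : x ∉ nonIsolated M, u (j ⟨x, hx⟩) ∈ K.1},
      K.2.union (hextra K).isCompact⟩ with hΦ
  -- the key fact: `NotClosedIn` forces the limit point into `K`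
  have key : ∀ (e : OnePoint ℕ → M) (K : Set M), Continuous e → IsCompact K →
      NotClosedIn (e '' Set.range ((↑) : ℕ → OnePoint ℕ)) K → e OnePoint.infty ∈ K := by
    intro e K hcont hK hnc
    by_contra hninf
    apply hnc
    refine ⟨Set.range e, (isCompact_range hcont).isClosed, ?_⟩
    ext z
    simp only [mem_inter_iff, mem_image, mem_range]
    constructor
    · rintro ⟨⟨w, ⟨n, rfl⟩, rfl⟩, hzK⟩
      exact ⟨⟨_, rfl⟩, hzK⟩
    · rintro ⟨⟨w, rfl⟩, hzK⟩
      refine ⟨⟨w, ?_, rfl⟩, hzK⟩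
      match w with
      | Option.none => exact absurd hzK hninf
      | Option.some n => exact ⟨n, rfl⟩
  -- assemble the morphism
  refine ⟨ψ, Φ, ?_⟩
  intro b K hrel
  have hb : E (pfun b) (hpmem b) OnePoint.infty ∈ K.1 :=
    key (E (pfun b) (hpmem b)) K.1 (hE1 _ _).continuous K.2 hrel
  rw [hE2] at hb
  show b ∈ (Φ K).1
  rw [hΦ]
  by_cases hbi : b ∈ nonIsolated M
  · left
    rw [show pfun b = b from dif_pos hbi] at hb
    exact hb
  · right
    refine ⟨hbi, ?_⟩
    rw [show pfun b = u (j ⟨b, hbi⟩) from dif_neg hbi] at hb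
    exact hb
end

section
/- Let M be a separable metrizable space. Then 𝐤𝐜(M)^ω ≥_T 𝐤(M): there is a Tukey morphism from the countable power of the compact-cover relation, namely (M^ℕ, K(M)^ℕ, ∈^ℕ) where (x_n)_n ∈^ℕ (K_n)_n iff x_n ∈ K_n for every n, to the k-structure 𝐤(M) = (CS(M), K(M), ̸⊥). -/
open Set Topology Filter

universe u v u' v'

/-- The countable power `𝐤𝐜(M)^ω` of the compact-cover relation. -/
def kcPowRel (M : Type u) [TopologicalSpace M] : TRel :=
  ⟨ℕ → M, ℕ → {K : Set M // IsCompact K}, fun x K => ∀ n, x n ∈ (K n).1⟩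

/-- Auxiliary: a compact set together with compact pieces that approach it is compact. -/
private lemma aux_compact {M : Type u} [MetricSpace M] {K0 : Set M} (hK0 : IsCompact K0)
    {A : ℕ → Set M} (hA : ∀ n, IsCompact (A n))
    (hth : ∀ n, A n ⊆ Metric.cthickening ((1/2 : ℝ)^n) K0) :
    IsCompact (K0 ∪ ⋃ n, A n) := by
  rw [isCompact_iff_ultrafilter_le_nhds]
  intro F hF
  rw [le_principal_iff] at hF
  by_cases h1 : K0 ∈ F
  · obtain ⟨a, ha, hle⟩ := hK0.ultrafilter_le_nhds F (le_principal_iff.mpr h1)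
    exact ⟨a, Or.inl ha, hle⟩
  by_cases h2 : ∃ n, A n ∈ F
  · obtain ⟨n, hn⟩ := h2
    obtain ⟨a, ha, hle⟩ := (hA n).ultrafilter_le_nhds F (le_principal_iff.mpr hn)
    exact ⟨a, Or.inr (mem_iUnion.mpr ⟨n, ha⟩), hle⟩
  push_neg at h2
  have hcth : ∀ ε > (0:ℝ), Metric.cthickening ε K0 ∈ F := by
    intro ε hε
    obtain ⟨m, hm⟩ := exists_pow_lt_of_lt_one hε (by norm_num : (1/2:ℝ) < 1)
    have hsub : K0 ∪ ⋃ n, A n ⊆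
        K0 ∪ ((⋃ n ∈ Finset.range m, A n) ∪ Metric.cthickening ε K0) := by
      rintro y (hy | hy)
      · exact Or.inl hy
      · obtain ⟨n, hn⟩ := mem_iUnion.mp hy
        rcases lt_or_ge n m with hnm | hnm
        · exact Or.inr (Or.inl (mem_iUnion₂.mpr ⟨n, Finset.mem_range.mpr hnm, hn⟩))
        · refine Or.inr (Or.inr (Metric.cthickening_mono ?_ K0 (hth n hn)))
          calc ((1:ℝ)/2)^n ≤ (1/2)^m :=
                pow_le_pow_of_le_one (by norm_num) (by norm_num) hnm
            _ ≤ ε := hm.le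
    have := F.mem_of_superset hF hsub
    rcases (Ultrafilter.union_mem_iff).mp this with h | h
    · exact absurd h h1
    rcases (Ultrafilter.union_mem_iff).mp h with h | h
    · obtain ⟨n, -, hn⟩ :=
        (Ultrafilter.finite_biUnion_mem_iff (Finset.range m).finite_toSet).mp h
      exact absurd hn (h2 n)
    · exact h
  by_contra hcon
  push_neg at hcon
  have hV : ∀ a ∈ K0, ∃ V : Set M, IsOpen V ∧ a ∈ V ∧ V ∉ F := by
    intro a ha
    have := hcon a (Or.inl ha)
    rw [Filter.le_def] at this
    push_neg at this
    obtain ⟨U, hU, hUF⟩ := this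
    obtain ⟨V, hVU, hVopen, haV⟩ := mem_nhds_iff.mp hU
    exact ⟨V, hVopen, haV, fun hVF => hUF (F.mem_of_superset hVF hVU)⟩
  choose! V hVopen haV hVF using hV
  have hcover : K0 ⊆ ⋃ a ∈ K0, V a := fun a ha => mem_iUnion₂.mpr ⟨a, ha, haV a ha⟩
  obtain ⟨b, hbK, hbfin, hbcov⟩ :=
    hK0.elim_finite_subcover_image (fun a ha => hVopen a ha) hcover
  have hWopen : IsOpen (⋃ a ∈ b, V a) := isOpen_biUnion fun a ha => hVopen a (hbK ha)
  obtain ⟨δ, hδ, hδsub⟩ := hK0.exists_cthickening_subset_open hWopen hbcov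
  have hWF : (⋃ a ∈ b, V a) ∈ F := F.mem_of_superset (hcth δ hδ) hδsub
  obtain ⟨a, hab, haF⟩ := (Ultrafilter.finite_biUnion_mem_iff hbfin).mp hWF
  exact hVF a (hbK hab) haF

open scoped OnePoint in
/-- Auxiliary: from a convergent sequence we extract its limit and fast-approaching points. -/
private lemma aux_key {M : Type u} [MetricSpace M] (S : Set M) (hS : S ∈ CS M) :
    ∃ (x : M) (s : ℕ → M), x ∉ S ∧ (∀ n, s n ∈ S) ∧ ∀ n, dist (s n) x ≤ (1/2)^n := by
  obtain ⟨e, he, rfl⟩ := hS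
  have hxS : e ∞ ∉ e '' range ((↑) : ℕ → OnePoint ℕ) := by
    rintro ⟨p, ⟨n, rfl⟩, hp⟩
    exact OnePoint.coe_ne_infty n (he.injective hp)
  have hcl : e ∞ ∈ closure (e '' range ((↑) : ℕ → OnePoint ℕ)) := by
    have h1 : (∞ : OnePoint ℕ) ∈ closure (range ((↑) : ℕ → OnePoint ℕ)) := by
      rw [(OnePoint.denseRange_coe (X := ℕ)).closure_range]
      trivial
    rw [he.closure_eq_preimage_closure_image] at h1
    exact h1
  have hpt : ∀ n : ℕ, ∃ y ∈ e '' range ((↑) : ℕ → OnePoint ℕ),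
      dist (e ∞) y < (1/2)^n := fun n =>
    Metric.mem_closure_iff.mp hcl _ (pow_pos (by norm_num) n)
  choose s hs hd using hpt
  exact ⟨e ∞, s, hxS, hs, fun n => by rw [dist_comm]; exact (hd n).le⟩

/-- for separable metrizable `M`, `𝐤𝐜(M)^ω ≥_T 𝐤(M)`. -/
theorem kcPow_tukey_kRel (M : Type u) [TopologicalSpace M]
    [TopologicalSpace.MetrizableSpace M] [TopologicalSpace.SeparableSpace M] :
    (kcPowRel M).Tukey (kRel M) := by
  letI : MetricSpace M := TopologicalSpace.metrizableSpaceMetric M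
  choose x s hxS hsS hd using fun S : ↥(CS M) => aux_key S.1 S.2
  refine ⟨fun S n => Nat.casesOn n (x S) (s S),
    fun K => ⟨(K 0).1 ∪ ⋃ n, ((K (n+1)).1 ∩ Metric.cthickening ((1/2:ℝ)^n) (K 0).1),
      aux_compact (K 0).2
        (fun n => ((K (n+1)).2.inter_right Metric.isClosed_cthickening))
        (fun n => inter_subset_right)⟩, ?_⟩
  intro S K h
  rintro ⟨C, hC, hEq⟩
  have hx0 : x S ∈ (K 0).1 := h 0
  set T : Set M := (K 0).1 ∪ ⋃ n, ((K (n+1)).1 ∩ Metric.cthickening ((1/2:ℝ)^n) (K 0).1)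
    with hT
  have hsT : ∀ n, s S n ∈ T := fun n =>
    Or.inr (mem_iUnion.mpr ⟨n, h (n+1),
      Metric.mem_cthickening_of_dist_le _ _ _ _ hx0 (hd S n)⟩)
  have hsC : ∀ n, s S n ∈ C := by
    intro n
    have hmem : s S n ∈ S.1 ∩ T := ⟨hsS S n, hsT n⟩
    rw [hEq] at hmem
    exact hmem.1
  have ht : Tendsto (s S) atTop (nhds (x S)) := by
    rw [tendsto_iff_dist_tendsto_zero]
    exact squeeze_zero (fun n => dist_nonneg) (hd S)
      (tendsto_pow_atTop_nhds_zero_of_lt_one (by norm_num) (by norm_num))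
  have hxC : x S ∈ C := hC.mem_of_tendsto ht (Filter.Eventually.of_forall hsC)
  have hfin : x S ∈ C ∩ T := ⟨hxC, Or.inl hx0⟩
  rw [← hEq] at hfin
  exact hxS S hfin.1
end

section
/- Let M be a separable metrizable space. Then: (1) ω ≥_T 𝐤(M) if and only if M is locally compact, i.e. M^# = ∅; (2) (ℕ→ℕ, ≤_∞) ≥_T 𝐤(M) if and only if M′ is compact (possibly empty); (3) (ℕ→ℕ, ≤_∞) & ω ≥_T 𝐤(M) if and only if M′ is σ-compact and M^# is compact; (4) (ℕ→ℕ, ≤_∞) × ω ≥_T 𝐤(M) if and only if M′ is σ-compact. -/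
open Set Topology Filter

universe u v u' v'

section KAux

open Metric

variable {M : Type u} [MetricSpace M]

lemma kaux_infinite_of_unbdd {s : Set ℕ} (h : ∀ k : ℕ, ∃ i ∈ s, k ≤ i) : s.Infinite :=
  Set.infinite_of_forall_exists_gt fun a => by
    obtain ⟨i, his, hle⟩ := h (a + 1); exact ⟨i, his, by omega⟩

lemma kaux_infinite_exists_ge {s : Set ℕ} (h : s.Infinite) (k : ℕ) : ∃ i ∈ s, k ≤ i := by
  obtain ⟨i, his, hi⟩ := h.exists_notMem_finset (Finset.range (k + 1))
  refine ⟨i, his, ?_⟩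
  simp only [Finset.mem_range, not_lt] at hi
  omega

lemma kaux_leInf_diag (g : ℕ → ℕ → ℕ) (j : ℕ) :
    leInf (g j) (fun n => (Finset.range (n + 1)).sup fun i => g i n) := by
  apply kaux_infinite_of_unbdd
  intro k
  refine ⟨max j k, ?_, le_max_right _ _⟩
  exact Finset.le_sup (f := fun i => g i (max j k)) (Finset.mem_range.mpr (Nat.lt_succ_of_le (le_max_left j k)))

lemma kaux_isClosed_nonIsolated : IsClosed (nonIsolated M) := by
  rw [← isOpen_compl_iff, isOpen_iff_mem_nhds]
  intro x hx
  have hx' : IsOpen ({x} : Set M) := not_not.mp hx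
  refine Filter.mem_of_superset (hx'.mem_nhds rfl) ?_
  rintro y (rfl : y = x)
  exact not_not_intro hx'

lemma kaux_isClosed_nonLC : IsClosed (nonLC M) := by
  rw [← isOpen_compl_iff, isOpen_iff_mem_nhds]
  intro x hx
  obtain ⟨K, hK, hKx⟩ := not_not.mp hx
  refine Filter.mem_of_superset (interior_mem_nhds.mpr hKx) fun y hy => ?_
  exact not_not_intro ⟨K, hK, mem_interior_iff_mem_nhds.mp hy⟩

lemma kaux_nonLC_subset_nonIsolated : nonLC M ⊆ nonIsolated M := fun x hx hxo =>
  hx ⟨{x}, isCompact_singleton, hxo.mem_nhds rfl⟩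

lemma kaux_limit_nonIsolated {u : ℕ → M} {x : M} (hne : ∀ n, u n ≠ x)
    (hlim : Filter.Tendsto u Filter.atTop (nhds x)) : x ∈ nonIsolated M := by
  intro hx
  have h2 : ∀ᶠ n in Filter.atTop, u n ∈ ({x} : Set M) := hlim (hx.mem_nhds rfl)
  obtain ⟨n, hn⟩ := h2.exists
  exact hne n hn

lemma kaux_cs_intro {u : ℕ → M} {x : M} (hu : Function.Injective u) (hne : ∀ n, u n ≠ x)
    (hlim : Filter.Tendsto u Filter.atTop (nhds x)) : Set.range u ∈ CS M := by
  refine ⟨fun o => o.elim x u, ?_, ?_⟩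
  · refine (Continuous.isClosedEmbedding ?_ ?_).toIsEmbedding
    · rw [OnePoint.continuous_iff_from_nat]
      exact hlim
    · intro a b hab
      cases a with
      | infty =>
        cases b with
        | infty => rfl
        | coe m => exact absurd hab.symm (hne m)
      | coe n =>
        cases b with
        | infty => exact absurd hab (hne n)
        | coe m => exact congrArg _ (hu hab)
  · rw [← Set.range_comp]
    rfl

lemma kaux_cs_elim {S : Set M} (hS : S ∈ CS M) :
    ∃ (x : M) (u : ℕ → M), Function.Injective u ∧ (∀ n, u n ≠ x) ∧
      Filter.Tendsto u Filter.atTop (nhds x) ∧ S = Set.range u := by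
  obtain ⟨e, he, rfl⟩ := hS
  refine ⟨e OnePoint.infty, fun n => e n, fun a b hab => ?_, fun n h => ?_, ?_, ?_⟩
  · exact OnePoint.coe_injective (he.injective hab)
  · exact OnePoint.coe_ne_infty n (he.injective h)
  · have hc := he.continuous
    rw [OnePoint.continuous_iff_from_nat] at hc
    exact hc
  · rw [← Set.range_comp]
    rfl

end KAux
section KAux2

open Metric Filter

variable {M : Type u} [MetricSpace M]

omit [MetricSpace M] in
lemma kaux_range_inter_infinite_iff {u : ℕ → M} (hu : Function.Injective u) {K : Set M} :
    (Set.range u ∩ K).Infinite ↔ {n | u n ∈ K}.Infinite := by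
  constructor
  · intro h hfin
    exact h (Set.Finite.subset (hfin.image u)
      (by rintro y ⟨⟨n, rfl⟩, hyK⟩; exact ⟨n, hyK, rfl⟩))
  · intro h
    refine Set.Infinite.mono ?_ (h.image hu.injOn)
    rintro y ⟨n, hn, rfl⟩
    exact ⟨⟨n, rfl⟩, hn⟩

lemma kaux_notClosedIn_iff {u : ℕ → M} {x : M} (hu : Function.Injective u) (hne : ∀ n, u n ≠ x)
    (hlim : Tendsto u atTop (nhds x)) (K : Set M) :
    NotClosedIn (Set.range u) K ↔ x ∈ K ∧ (Set.range u ∩ K).Infinite := by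
  have hxr : x ∉ Set.range u := by rintro ⟨n, rfl⟩; exact hne n rfl
  constructor
  · intro h
    by_contra hcon
    rw [not_and_or] at hcon
    apply h
    rcases hcon with hx | hfin
    · refine ⟨insert x (Set.range u), hlim.isCompact_insert_range.isClosed, ?_⟩
      ext y
      constructor
      · rintro ⟨hy, hyK⟩; exact ⟨Set.mem_insert_of_mem _ hy, hyK⟩
      · rintro ⟨hy, hyK⟩
        rcases Set.mem_insert_iff.mp hy with rfl | hy'
        · exact absurd hyK hx
        · exact ⟨hy', hyK⟩
    · rw [Set.not_infinite] at hfin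
      exact ⟨Set.range u ∩ K, hfin.isClosed, by rw [Set.inter_assoc, Set.inter_self]⟩
  · rintro ⟨hxK, hinf⟩ ⟨C, hC, hCK⟩
    have hN : {n | u n ∈ K}.Infinite := (kaux_range_inter_infinite_iff hu).mp hinf
    have hxcl : x ∈ closure (Set.range u ∩ K) := by
      rw [mem_closure_iff_nhds]
      intro t ht
      have h2 : ∀ᶠ n in atTop, u n ∈ t := hlim ht
      obtain ⟨a, ha⟩ := eventually_atTop.mp h2
      obtain ⟨n, hns, hna⟩ := kaux_infinite_exists_ge hN a
      exact ⟨u n, ha n hna, ⟨n, rfl⟩, hns⟩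
    rw [hCK] at hxcl
    have hxC : x ∈ C := by
      have h3 := closure_mono (Set.inter_subset_left (s := C) (t := K)) hxcl
      rwa [hC.closure_eq] at h3
    have h4 : x ∈ Set.range u ∩ K := by rw [hCK]; exact ⟨hxC, hxK⟩
    exact hxr h4.1

private noncomputable def kauxAvoidSeq (x : M) (V : ℕ → Set M)
    (pick : (n : ℕ) → (ε : ℝ) → 0 < ε → {y : M // y ≠ x ∧ y ∉ V n ∧ dist y x < ε}) :
    (n : ℕ) → {y : M // y ≠ x ∧ y ∉ V n ∧ dist y x < 1 / (n + 1)}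
  | 0 => ⟨(pick 0 1 one_pos).1, (pick 0 1 one_pos).2.1, (pick 0 1 one_pos).2.2.1,
      lt_of_lt_of_le (pick 0 1 one_pos).2.2.2 (by norm_num)⟩
  | (n + 1) =>
      let prev := kauxAvoidSeq x V pick n
      let p := pick (n + 1) (min (1 / (n + 1 + 1 : ℝ)) (dist prev.1 x))
        (lt_min (by positivity) (dist_pos.mpr prev.2.1))
      ⟨p.1, p.2.1, p.2.2.1, by
        have h1 := p.2.2.2
        have h2 := lt_of_lt_of_le h1 (min_le_left _ _)
        have h3 : 1 / ((n : ℝ) + 1 + 1) = 1 / (((n + 1 : ℕ) : ℝ) + 1) := by push_cast; ring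
        exact lt_of_lt_of_le h2 h3.le⟩

private lemma kauxAvoidSeq_succ_lt (x : M) (V : ℕ → Set M)
    (pick : (n : ℕ) → (ε : ℝ) → 0 < ε → {y : M // y ≠ x ∧ y ∉ V n ∧ dist y x < ε}) (n : ℕ) :
    dist (kauxAvoidSeq x V pick (n + 1)).1 x < dist (kauxAvoidSeq x V pick n).1 x := by
  rw [kauxAvoidSeq]
  exact lt_of_lt_of_le (pick _ _ _).2.2.2 (min_le_right _ _)

lemma kaux_exists_avoid_seq (x : M) (V : ℕ → Set M)
    (hV : ∀ n, ∀ ε : ℝ, 0 < ε → ∃ y, y ≠ x ∧ y ∉ V n ∧ dist y x < ε) :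
    ∃ u : ℕ → M, Function.Injective u ∧ (∀ n, u n ≠ x) ∧
      Tendsto u atTop (nhds x) ∧ ∀ n, u n ∉ V n := by
  have pick : (n : ℕ) → (ε : ℝ) → 0 < ε → {y : M // y ≠ x ∧ y ∉ V n ∧ dist y x < ε} :=
    fun n ε hε => ⟨(hV n ε hε).choose, (hV n ε hε).choose_spec⟩
  refine ⟨fun n => (kauxAvoidSeq x V pick n).1, ?_, fun n => (kauxAvoidSeq x V pick n).2.1, ?_,
    fun n => (kauxAvoidSeq x V pick n).2.2.1⟩
  · have hanti : StrictAnti (fun n => dist (kauxAvoidSeq x V pick n).1 x) :=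
      strictAnti_nat_of_succ_lt (kauxAvoidSeq_succ_lt x V pick)
    intro a b hab
    exact hanti.injective (show dist (kauxAvoidSeq x V pick a).1 x
      = dist (kauxAvoidSeq x V pick b).1 x by rw [show (kauxAvoidSeq x V pick a).1
        = (kauxAvoidSeq x V pick b).1 from hab])
  · rw [Metric.tendsto_atTop]
    intro ε hε
    obtain ⟨N, hN⟩ := exists_nat_gt (1 / ε)
    refine ⟨N, fun n hn => ?_⟩
    have h1 := (kauxAvoidSeq x V pick n).2.2.2
    have h2 : 1 / ε < (n : ℝ) + 1 := by
      refine hN.trans_le ?_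
      have : (N : ℝ) ≤ n := by exact_mod_cast hn
      linarith
    have h3 : 1 / ((n : ℝ) + 1) < ε := by
      rw [div_lt_iff₀ (by positivity)]
      rw [div_lt_iff₀ hε] at h2
      linarith
    linarith

lemma kaux_nonIsolated_pick {x : M} (hx : x ∈ nonIsolated M) :
    ∀ ε : ℝ, 0 < ε → ∃ y, y ≠ x ∧ y ∉ (∅ : Set M) ∧ dist y x < ε := by
  intro ε hε
  by_contra h
  push_neg at h
  apply hx
  have hball : ({x} : Set M) = Metric.ball x ε := by
    apply Set.Subset.antisymm
    · rintro y (rfl : y = x); exact Metric.mem_ball_self hε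
    · intro y hy
      by_contra hyx
      exact absurd (Metric.mem_ball.mp hy) (not_lt.mpr (h y hyx (Set.notMem_empty y)))
  rw [hball]
  exact Metric.isOpen_ball

lemma kaux_nonLC_pick {x : M} (hx : x ∈ nonLC M) {C : Set M} (hC : IsCompact C) :
    ∀ ε : ℝ, 0 < ε → ∃ y, y ≠ x ∧ y ∉ C ∧ dist y x < ε := by
  intro ε hε
  by_contra h
  push_neg at h
  refine hx ⟨C ∪ {x}, hC.union isCompact_singleton,
    Filter.mem_of_superset (Metric.ball_mem_nhds x hε) ?_⟩
  intro y hy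
  by_cases hyx : y = x
  · exact Set.mem_union_right _ hyx
  · by_cases hyC : y ∈ C
    · exact Set.mem_union_left _ hyC
    · exact absurd (Metric.mem_ball.mp hy) (not_lt.mpr (h y hyx hyC))

lemma kaux_exists_cs (x : M) (hx : x ∈ nonIsolated M) :
    ∃ u : ℕ → M, Function.Injective u ∧ (∀ n, u n ≠ x) ∧
      Tendsto u atTop (nhds x) ∧ Set.range u ∈ CS M := by
  obtain ⟨u, h1, h2, h3, -⟩ := kaux_exists_avoid_seq x (fun _ => ∅)
    (fun _ => kaux_nonIsolated_pick hx)
  exact ⟨u, h1, h2, h3, kaux_cs_intro h1 h2 h3⟩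

end KAux2
section KAux3

open Metric Filter

variable {M : Type u} [MetricSpace M]

lemma kaux_isCompact_base_union {B : Set M} (hB : IsCompact B) (E : ℕ → Set M)
    (hE : ∀ k, IsCompact (E k)) (hth : ∀ k, E k ⊆ Metric.cthickening (1 / (k + 1)) B) :
    IsCompact (B ∪ ⋃ k, E k) := by
  apply isCompact_of_finite_subcover
  intro ι U hU hcov
  classical
  obtain ⟨t₀, ht₀⟩ := hB.elim_finite_subcover U hU (Set.subset_union_left.trans hcov)
  obtain ⟨δ, hδ, hth'⟩ := hB.exists_thickening_subset_open (isOpen_biUnion fun i _ => hU i) ht₀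
  obtain ⟨k₀, hk₀⟩ := exists_nat_gt (1 / δ)
  have hEk : ∀ k, k₀ ≤ k → E k ⊆ ⋃ i ∈ t₀, U i := by
    intro k hk
    refine (hth k).trans ((?_ : Metric.cthickening (1/(k+1)) B ⊆ Metric.thickening δ B).trans hth')
    apply Metric.cthickening_subset_thickening' hδ
    have h2 : 1 / δ < (k : ℝ) + 1 := by
      refine hk₀.trans_le ?_
      have : (k₀ : ℝ) ≤ k := by exact_mod_cast hk
      linarith
    rw [div_lt_iff₀ (by positivity)]
    rw [div_lt_iff₀ hδ] at h2
    linarith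
  have hsub : ∀ k : ℕ, ∃ t : Finset ι, E k ⊆ ⋃ i ∈ t, U i := by
    intro k
    by_cases hk : k₀ ≤ k
    · exact ⟨t₀, hEk k hk⟩
    · exact (hE k).elim_finite_subcover U hU
        (((Set.subset_iUnion E k).trans Set.subset_union_right).trans hcov)
  choose t ht using hsub
  refine ⟨t₀ ∪ (Finset.range k₀).biUnion t, ?_⟩
  have hmono : ∀ (t' : Finset ι), t' ⊆ t₀ ∪ (Finset.range k₀).biUnion t →
      (⋃ i ∈ t', U i) ⊆ ⋃ i ∈ t₀ ∪ (Finset.range k₀).biUnion t, U i := by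
    intro t' ht' y hy
    simp only [Set.mem_iUnion] at hy ⊢
    obtain ⟨i, hi, hyi⟩ := hy
    exact ⟨i, ht' hi, hyi⟩
  rintro y (hy | hy)
  · exact hmono t₀ Finset.subset_union_left (ht₀ hy)
  · obtain ⟨k, hk⟩ := Set.mem_iUnion.mp hy
    by_cases hkk : k₀ ≤ k
    · exact hmono t₀ Finset.subset_union_left (hEk k hkk hk)
    · refine hmono (t k) ?_ (ht k hk)
      exact (Finset.subset_biUnion_of_mem t (Finset.mem_range.mpr (by omega))).trans
        Finset.subset_union_right

end KAux3
section KAux4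

open Metric Filter

variable {M : Type u} [MetricSpace M]

/-- The basic compact sets used in the backward constructions. -/
def kauxPhi (C : ℕ → Set M) (ii : ℕ → M) (B : Set M) (f : ℕ → ℕ) : Set M :=
  B ∪ ⋃ k, ((C (f k) ∪ ii '' {j | j ≤ f k}) ∩ Metric.cthickening (1 / (k + 1)) B)

lemma kaux_subset_Phi (C : ℕ → Set M) (ii : ℕ → M) (B : Set M) (f : ℕ → ℕ) :
    B ⊆ kauxPhi C ii B f := Set.subset_union_left

lemma kaux_isCompact_Phi {C : ℕ → Set M} (hC : ∀ n, IsCompact (C n)) (ii : ℕ → M)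
    {B : Set M} (hB : IsCompact B) (f : ℕ → ℕ) : IsCompact (kauxPhi C ii B f) := by
  apply kaux_isCompact_base_union hB
  · intro k
    apply IsCompact.inter_right _ Metric.isClosed_cthickening
    exact (hC (f k)).union (((Set.finite_Iic (f k)).image ii).isCompact)
  · intro k
    exact Set.inter_subset_right

lemma kaux_catch_Phi {C : ℕ → Set M} (hCmono : Monotone C) {ii : ℕ → M}
    (hidx : ∀ y : M, ∃ j, ii j = y ∨ y ∈ C j)
    {u : ℕ → M} {x : M} (hu : Function.Injective u)
    (hlim : Tendsto u atTop (nhds x)) :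
    ∃ g : ℕ → ℕ, ∀ (B : Set M) (f : ℕ → ℕ), x ∈ B → leInf g f →
      (Set.range u ∩ kauxPhi C ii B f).Infinite := by
  choose idx hidx' using hidx
  have ha : ∀ k : ℕ, ∃ N, ∀ i, N ≤ i → dist (u i) x ≤ 1 / (k + 1) := by
    intro k
    obtain ⟨N, hN⟩ := (Metric.tendsto_atTop.mp hlim) (1 / (k + 1)) (by positivity)
    exact ⟨N, fun i hi => (hN i hi).le⟩
  choose a hA using ha
  refine ⟨fun k => (Finset.Icc (a k) (a k + k)).sup (fun i => idx (u i)), ?_⟩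
  intro B f hxB hleInf
  have key : ∀ K : ℕ, ∃ i, K ≤ i ∧ u i ∈ kauxPhi C ii B f := by
    intro K
    obtain ⟨k, hk1, hk2⟩ := kaux_infinite_exists_ge hleInf K
    refine ⟨a k + k, le_trans hk2 (Nat.le_add_left k (a k)), ?_⟩
    apply Set.mem_union_right
    apply Set.mem_iUnion.mpr
    refine ⟨k, ?_, ?_⟩
    · have hmem : a k + k ∈ Finset.Icc (a k) (a k + k) :=
        Finset.mem_Icc.mpr ⟨Nat.le_add_right _ _, le_refl _⟩
      have hile : idx (u (a k + k)) ≤ f k :=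
        le_trans (Finset.le_sup (f := fun i => idx (u i)) hmem) hk1
      rcases hidx' (u (a k + k)) with h | h
      · exact Or.inr ⟨idx (u (a k + k)), hile, h⟩
      · exact Or.inl (hCmono hile h)
    · exact Metric.mem_cthickening_of_dist_le (u (a k + k)) x _ B hxB (hA k _ (Nat.le_add_right _ _))
  have hinf : {i | u i ∈ kauxPhi C ii B f}.Infinite :=
    kaux_infinite_of_unbdd (fun K => (key K).imp (fun i h => ⟨h.2, h.1⟩))
  refine Set.Infinite.mono ?_ (hinf.image hu.injOn)
  rintro y ⟨i, hi, rfl⟩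
  exact ⟨⟨i, rfl⟩, hi⟩

lemma kaux_exists_escape {Y : Set M} (hY : ¬IsCompact (closure Y)) :
    ∃ y : ℕ → M, (∀ j, y j ∈ Y) ∧ ∀ K : Set M, IsCompact K → ∃ j, y j ∉ K := by
  have hnsc : ¬IsSeqCompact (closure Y) := fun h => hY h.isCompact
  rw [IsSeqCompact] at hnsc
  push_neg at hnsc
  obtain ⟨z, hz, hnc⟩ := hnsc
  have hz' : ∀ j : ℕ, ∃ w ∈ Y, dist (z j) w < 1 / (j + 1) := fun j =>
    Metric.mem_closure_iff.mp (hz j) _ (by positivity)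
  choose y hy1 hy2 using hz'
  refine ⟨y, hy1, ?_⟩
  intro K hK
  by_contra h
  push_neg at h
  obtain ⟨aℓ, haK, φ, hφ, hconv⟩ := hK.isSeqCompact h
  have h1 : Tendsto (fun n : ℕ => 1 / ((φ n : ℝ) + 1)) atTop (nhds 0) := by
    have hf : ∀ n : ℕ, 0 ≤ 1 / ((φ n : ℝ) + 1) := fun n => by positivity
    have hfg : ∀ n : ℕ, 1 / ((φ n : ℝ) + 1) ≤ 1 / ((n : ℝ) + 1) := by
      intro n
      have hφn : (n : ℝ) ≤ (φ n : ℝ) := by exact_mod_cast hφ.le_apply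
      apply one_div_le_one_div_of_le (by positivity)
      linarith
    exact squeeze_zero hf hfg tendsto_one_div_add_atTop_nhds_zero_nat
  have h2 : Tendsto (fun n => dist (y (φ n)) aℓ) atTop (nhds 0) :=
    tendsto_iff_dist_tendsto_zero.mp hconv
  have hzconv : Tendsto (z ∘ φ) atTop (nhds aℓ) := by
    rw [tendsto_iff_dist_tendsto_zero]
    apply squeeze_zero (fun n => dist_nonneg)
      (g := fun n => 1 / ((φ n : ℝ) + 1) + dist (y (φ n)) aℓ)
    · intro n
      calc dist ((z ∘ φ) n) aℓ ≤ dist (z (φ n)) (y (φ n)) + dist (y (φ n)) aℓ :=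
            dist_triangle _ _ _
        _ ≤ _ := add_le_add_left (hy2 (φ n)).le _
    · simpa using h1.add h2
  have haY : aℓ ∈ closure Y := isClosed_closure.mem_of_tendsto hzconv
    (Filter.Eventually.of_forall fun n => hz (φ n))
  exact hnc aℓ haY φ hφ hzconv

end KAux4
section KAux5

open Metric Filter

lemma kaux_tukey_trans {A B C : TRel} (h1 : A.Tukey B) (h2 : B.Tukey C) : A.Tukey C := by
  obtain ⟨ψ1, φ1, hh1⟩ := h1
  obtain ⟨ψ2, φ2, hh2⟩ := h2
  exact ⟨ψ1 ∘ ψ2, φ2 ∘ φ1, fun c a h => hh2 c (φ1 a) (hh1 (ψ2 c) a h)⟩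

lemma kaux_prod_tukey_with : (leInfRel.prod omegaRel).Tukey (leInfRel.with' omegaRel) := by
  refine ⟨fun d => Sum.elim (fun g => ((g, 0) : (ℕ → ℕ) × ℕ)) (fun m => ((fun _ => 0, m) : (ℕ → ℕ) × ℕ)) d, id, ?_⟩
  rintro (g | m) a h
  · exact h.1
  · exact h.2

variable {M : Type u} [MetricSpace M]

lemma kaux_tukey_kRel_of_isEmpty (hM : IsEmpty M) (A : TRel) : A.Tukey (kRel M) := by
  have hcs : IsEmpty ↥(CS M) := by
    constructor
    rintro ⟨S, hS⟩
    obtain ⟨e, -, -⟩ := hS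
    exact hM.elim (e OnePoint.infty)
  exact ⟨fun b => (hcs.elim b), fun _ => ⟨∅, isCompact_empty⟩, fun b => (hcs.elim b)⟩

variable [TopologicalSpace.SeparableSpace M]

lemma kaux_exists_ii [Nonempty M] :
    ∃ ii : ℕ → M, ∀ y : M, IsOpen ({y} : Set M) → ∃ j, ii j = y := by
  obtain ⟨D, hDc, hDd⟩ := TopologicalSpace.exists_countable_dense M
  obtain ⟨f, hf⟩ := hDc.exists_eq_range hDd.nonempty
  refine ⟨f, fun y hy => ?_⟩
  obtain ⟨z, hz1, hz2⟩ := hDd.inter_open_nonempty {y} hy ⟨y, rfl⟩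
  rw [hf] at hz2
  obtain ⟨j, hj⟩ := hz2
  exact ⟨j, by rw [hj]; exact hz1⟩

lemma kaux_exists_L :
    ∃ L : ℕ → Set M, (∀ n, IsCompact (L n)) ∧ Monotone L ∧
      ∀ x : M, x ∉ nonLC M → ∃ j, L j ∈ nhds x := by
  cases isEmpty_or_nonempty M with
  | inl h => exact ⟨fun _ => ∅, fun _ => isCompact_empty, monotone_const, fun x => h.elim x⟩
  | inr hne =>
    haveI : SecondCountableTopology M :=
      UniformSpace.secondCountable_of_separable M
    obtain ⟨b, hbc, hbne', hb⟩ := TopologicalSpace.exists_countable_basis M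
    have hbnonempty : b.Nonempty := by
      obtain ⟨x⟩ := hne
      have hx : x ∈ ⋃₀ b := by rw [hb.sUnion_eq]; exact Set.mem_univ x
      obtain ⟨s, hs, -⟩ := hx
      exact ⟨s, hs⟩
    obtain ⟨Bf, hBf⟩ := hbc.exists_eq_range hbnonempty
    classical
    have hKKdef : ∀ i : ℕ, ∃ KK : Set M, IsCompact KK ∧
        ((∃ K : Set M, IsCompact K ∧ Bf i ⊆ K) → Bf i ⊆ KK) := by
      intro i
      by_cases h : ∃ K : Set M, IsCompact K ∧ Bf i ⊆ K
      · exact ⟨h.choose, h.choose_spec.1, fun _ => h.choose_spec.2⟩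
      · exact ⟨∅, isCompact_empty, fun h' => absurd h' h⟩
    choose KK hKKc hKKsub using hKKdef
    refine ⟨fun n => ⋃ i ∈ Finset.range (n + 1), KK i,
      fun n => (Finset.range (n + 1)).isCompact_biUnion (fun i _ => hKKc i), ?_, ?_⟩
    · intro m n hmn y hy
      simp only [Set.mem_iUnion, Finset.mem_range] at hy ⊢
      obtain ⟨i, hi, hyi⟩ := hy
      exact ⟨i, by omega, hyi⟩
    · intro x hx
      obtain ⟨K, hKc, hKx⟩ := not_not.mp hx
      have hint : interior K ∈ nhds x := interior_mem_nhds.mpr hKx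
      obtain ⟨t, htb, hxt, hts⟩ := hb.mem_nhds_iff.mp hint
      have htr : t ∈ Set.range Bf := by rw [← hBf]; exact htb
      obtain ⟨i, rfl⟩ := htr
      have hsub : Bf i ⊆ KK i := hKKsub i ⟨K, hKc, hts.trans interior_subset⟩
      refine ⟨i, Filter.mem_of_superset ((hb.isOpen htb).mem_nhds hxt) ?_⟩
      refine hsub.trans ?_
      exact Set.subset_biUnion_of_mem (u := fun i => KK i) (Finset.mem_range.mpr (by omega))

end KAux5
section KAux6

open Metric Filter

variable {M : Type u} [MetricSpace M]

lemma kaux_monotonize (K : ℕ → Set M) (hK : ∀ n, IsCompact (K n)) :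
    ∃ C : ℕ → Set M, (∀ n, IsCompact (C n)) ∧ Monotone C ∧ (∀ n, K n ⊆ C n) ∧
      (⋃ n, C n) = ⋃ n, K n := by
  have hsub : ∀ n, K n ⊆ ⋃ i ∈ Finset.range (n + 1), K i := by
    intro n y hy
    simp only [Set.mem_iUnion, Finset.mem_range]
    exact ⟨n, by omega, hy⟩
  refine ⟨fun n => ⋃ i ∈ Finset.range (n + 1), K i,
    fun n => (Finset.range (n + 1)).isCompact_biUnion (fun i _ => hK i), ?_, hsub, ?_⟩
  · intro m n hmn y hy
    simp only [Set.mem_iUnion, Finset.mem_range] at hy ⊢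
    obtain ⟨i, hi, hyi⟩ := hy
    exact ⟨i, by omega, hyi⟩
  · apply Set.Subset.antisymm
    · apply Set.iUnion_subset
      intro n y hy
      simp only [Set.mem_iUnion, Finset.mem_range] at hy
      obtain ⟨i, hi, hyi⟩ := hy
      exact Set.mem_iUnion.mpr ⟨i, hyi⟩
    · exact Set.iUnion_subset fun n => (hsub n).trans (Set.subset_iUnion (fun n => ⋃ i ∈ Finset.range (n + 1), K i) n)

variable [TopologicalSpace.SeparableSpace M]

lemma kaux_tukey_prod (hsig : ∃ K : ℕ → Set M, (∀ n, IsCompact (K n)) ∧ nonIsolated M = ⋃ n, K n) :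
    (leInfRel.prod omegaRel).Tukey (kRel M) := by
  cases isEmpty_or_nonempty M with
  | inl h => exact kaux_tukey_kRel_of_isEmpty h _
  | inr h =>
    obtain ⟨K, hKc, hKu⟩ := hsig
    obtain ⟨C, hCc, hCm, hKC, hCU⟩ := kaux_monotonize K hKc
    have hcov : nonIsolated M ⊆ ⋃ n, C n := by rw [hCU, ← hKu]
    obtain ⟨ii, hii⟩ := kaux_exists_ii (M := M)
    have hidx : ∀ y : M, ∃ j, ii j = y ∨ y ∈ C j := by
      intro y
      by_cases hy : IsOpen ({y} : Set M)
      · obtain ⟨j, hj⟩ := hii y hy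
        exact ⟨j, Or.inl hj⟩
      · obtain ⟨j, hj⟩ := Set.mem_iUnion.mp (hcov hy)
        exact ⟨j, Or.inr hj⟩
    have data : ∀ S : ↥(CS M), ∃ p : (ℕ → ℕ) × ℕ,
        ∀ q : (ℕ → ℕ) × ℕ, leInf p.1 q.1 → p.2 ≤ q.2 →
          NotClosedIn S.1 (kauxPhi C ii (C q.2) q.1) := by
      rintro ⟨S, hS⟩
      obtain ⟨x, u, hu, hne, hlim, rfl⟩ := kaux_cs_elim hS
      obtain ⟨m, hm⟩ := Set.mem_iUnion.mp (hcov (kaux_limit_nonIsolated hne hlim))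
      obtain ⟨g, hg⟩ := kaux_catch_Phi hCm hidx hu hlim
      refine ⟨(g, m), fun q h1 h2 => ?_⟩
      have hxq : x ∈ C q.2 := hCm h2 hm
      rw [kaux_notClosedIn_iff hu hne hlim]
      exact ⟨kaux_subset_Phi C ii _ _ hxq, hg (C q.2) q.1 hxq h1⟩
    choose ψ hψ using data
    exact ⟨ψ, fun q => ⟨kauxPhi C ii (C q.2) q.1, kaux_isCompact_Phi hCc ii (hCc q.2) q.1⟩,
      fun S q hrel => hψ S q hrel.1 hrel.2⟩

lemma kaux_tukey_leInf (hcpt : IsCompact (nonIsolated M)) : leInfRel.Tukey (kRel M) := by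
  cases isEmpty_or_nonempty M with
  | inl h => exact kaux_tukey_kRel_of_isEmpty h _
  | inr h =>
    obtain ⟨ii, hii⟩ := kaux_exists_ii (M := M)
    have hidx : ∀ y : M, ∃ j, ii j = y ∨ y ∈ (fun _ : ℕ => nonIsolated M) j := by
      intro y
      by_cases hy : IsOpen ({y} : Set M)
      · obtain ⟨j, hj⟩ := hii y hy
        exact ⟨j, Or.inl hj⟩
      · exact ⟨0, Or.inr hy⟩
    have data : ∀ S : ↥(CS M), ∃ g : ℕ → ℕ, ∀ f : ℕ → ℕ, leInf g f →
        NotClosedIn S.1 (kauxPhi (fun _ => nonIsolated M) ii (nonIsolated M) f) := by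
      rintro ⟨S, hS⟩
      obtain ⟨x, u, hu, hne, hlim, rfl⟩ := kaux_cs_elim hS
      have hx : x ∈ nonIsolated M := kaux_limit_nonIsolated hne hlim
      obtain ⟨g, hg⟩ := kaux_catch_Phi (monotone_const) hidx hu hlim
      refine ⟨g, fun f h1 => ?_⟩
      rw [kaux_notClosedIn_iff hu hne hlim]
      exact ⟨kaux_subset_Phi _ ii _ _ hx, hg (nonIsolated M) f hx h1⟩
    choose ψ hψ using data
    exact ⟨ψ, fun f => ⟨kauxPhi (fun _ => nonIsolated M) ii (nonIsolated M) f,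
      kaux_isCompact_Phi (fun _ => hcpt) ii hcpt f⟩, fun S f hrel => hψ S f hrel⟩

lemma kaux_tukey_omega (hempty : nonLC M = ∅) : omegaRel.Tukey (kRel M) := by
  obtain ⟨L, hLc, hLm, hLn⟩ := kaux_exists_L (M := M)
  have data : ∀ S : ↥(CS M), ∃ j : ℕ, ∀ n : ℕ, j ≤ n → NotClosedIn S.1 (L n) := by
    rintro ⟨S, hS⟩
    obtain ⟨x, u, hu, hne, hlim, rfl⟩ := kaux_cs_elim hS
    have hx : x ∉ nonLC M := by rw [hempty]; exact Set.notMem_empty x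
    obtain ⟨j, hj⟩ := hLn x hx
    refine ⟨j, fun n hn => ?_⟩
    have hnb : L n ∈ nhds x := Filter.mem_of_superset hj (hLm hn)
    rw [kaux_notClosedIn_iff hu hne hlim]
    refine ⟨mem_of_mem_nhds hnb, ?_⟩
    rw [kaux_range_inter_infinite_iff hu]
    obtain ⟨N, hN⟩ := eventually_atTop.mp (hlim hnb)
    exact kaux_infinite_of_unbdd (fun k => ⟨max N k, hN _ (le_max_left _ _), le_max_right _ _⟩)
  choose ψ hψ using data
  exact ⟨ψ, fun n => ⟨L n, hLc n⟩, fun S n h => hψ S n h⟩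

lemma kaux_tukey_with (hsig : ∃ K : ℕ → Set M, (∀ n, IsCompact (K n)) ∧ nonIsolated M = ⋃ n, K n)
    (hcpt : IsCompact (nonLC M)) : (leInfRel.with' omegaRel).Tukey (kRel M) := by
  cases isEmpty_or_nonempty M with
  | inl h => exact kaux_tukey_kRel_of_isEmpty h _
  | inr h =>
    obtain ⟨K, hKc, hKu⟩ := hsig
    obtain ⟨C, hCc, hCm, hKC, hCU⟩ := kaux_monotonize K hKc
    have hcov : nonIsolated M ⊆ ⋃ n, C n := by rw [hCU, ← hKu]
    obtain ⟨ii, hii⟩ := kaux_exists_ii (M := M)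
    obtain ⟨L, hLc, hLm, hLn⟩ := kaux_exists_L (M := M)
    have hidx : ∀ y : M, ∃ j, ii j = y ∨ y ∈ C j := by
      intro y
      by_cases hy : IsOpen ({y} : Set M)
      · obtain ⟨j, hj⟩ := hii y hy
        exact ⟨j, Or.inl hj⟩
      · obtain ⟨j, hj⟩ := Set.mem_iUnion.mp (hcov hy)
        exact ⟨j, Or.inr hj⟩
    have data : ∀ S : ↥(CS M), ∃ d : (ℕ → ℕ) ⊕ ℕ,
        ∀ q : (ℕ → ℕ) × ℕ, Sum.elim (fun g => leInf g q.1) (fun m => m ≤ q.2) d →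
          NotClosedIn S.1 (kauxPhi C ii (nonLC M) q.1 ∪ L q.2) := by
      rintro ⟨S, hS⟩
      obtain ⟨x, u, hu, hne, hlim, rfl⟩ := kaux_cs_elim hS
      by_cases hx : x ∈ nonLC M
      · obtain ⟨g, hg⟩ := kaux_catch_Phi hCm hidx hu hlim
        refine ⟨Sum.inl g, fun q hq => ?_⟩
        rw [kaux_notClosedIn_iff hu hne hlim]
        constructor
        · exact Set.mem_union_left _ (kaux_subset_Phi C ii _ _ hx)
        · refine Set.Infinite.mono ?_ (hg (nonLC M) q.1 hx hq)
          exact Set.inter_subset_inter_right _ Set.subset_union_left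
      · obtain ⟨j, hj⟩ := hLn x hx
        refine ⟨Sum.inr j, fun q hq => ?_⟩
        have hnb : L q.2 ∈ nhds x := Filter.mem_of_superset hj (hLm hq)
        rw [kaux_notClosedIn_iff hu hne hlim]
        refine ⟨Set.mem_union_right _ (mem_of_mem_nhds hnb), ?_⟩
        rw [kaux_range_inter_infinite_iff hu]
        apply kaux_infinite_of_unbdd
        obtain ⟨N, hN⟩ := eventually_atTop.mp (hlim hnb)
        intro k
        exact ⟨max N k, Set.mem_union_right _ (hN _ (le_max_left _ _)), le_max_right _ _⟩
    choose ψ hψ using data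
    exact ⟨ψ, fun q => ⟨kauxPhi C ii (nonLC M) q.1 ∪ L q.2,
      (kaux_isCompact_Phi hCc ii hcpt q.1).union (hLc q.2)⟩,
      fun S q hrel => hψ S q hrel⟩

end KAux6
section KAux7

open Metric Filter

variable {M : Type u} [MetricSpace M]

lemma kaux_forward_omega (h : omegaRel.Tukey (kRel M)) : nonLC M = ∅ := by
  obtain ⟨ψ, φ, hmor₀⟩ := h
  have hmor : ∀ (S : ↥(CS M)) (n : ℕ), Nat.le (ψ S) n → NotClosedIn S.1 (φ n).1 := hmor₀
  rw [Set.eq_empty_iff_forall_notMem]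
  intro x hx
  set V : ℕ → Set M := fun n => ⋃ j ∈ Finset.range (n + 1), (φ j).1 with hV
  have hVc : ∀ n, IsCompact (V n) :=
    fun n => (Finset.range (n + 1)).isCompact_biUnion (fun j _ => (φ j).2)
  obtain ⟨u, hu, hne, hlim, havoid⟩ := kaux_exists_avoid_seq x V
    (fun n => kaux_nonLC_pick hx (hVc n))
  have hS : Set.range u ∈ CS M := kaux_cs_intro hu hne hlim
  obtain ⟨n₀, hn₀⟩ : ∃ n : ℕ, n = ψ ⟨Set.range u, hS⟩ := ⟨ψ ⟨Set.range u, hS⟩, rfl⟩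
  have hrel := hmor ⟨Set.range u, hS⟩ n₀ (by rw [← hn₀]; exact Nat.le_refl n₀)
  rw [show ((⟨Set.range u, hS⟩ : ↥(CS M)) : ↥(CS M)).1 = Set.range u from rfl,
    kaux_notClosedIn_iff hu hne hlim] at hrel
  refine hrel.2 (Set.Finite.subset ((Set.finite_Iio n₀).image u) ?_)
  rintro y ⟨⟨i, rfl⟩, hyK⟩
  refine ⟨i, Set.mem_Iio.mpr ?_, rfl⟩
  by_contra hge
  push_neg at hge
  exact havoid i (Set.mem_biUnion (Finset.mem_range.mpr (by omega)) hyK)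

lemma kaux_forward_leInf (h : leInfRel.Tukey (kRel M)) : IsCompact (nonIsolated M) := by
  obtain ⟨ψ, φ, hmor₀⟩ := h
  have hmor : ∀ (S : ↥(CS M)) (f : ℕ → ℕ), leInf (ψ S : ℕ → ℕ) f → NotClosedIn S.1 (φ f).1 := hmor₀
  by_contra hnc
  rw [← (kaux_isClosed_nonIsolated (M := M)).closure_eq] at hnc
  obtain ⟨y, hyY, hesc⟩ := kaux_exists_escape hnc
  choose u hu hne hlim hcs using fun j => kaux_exists_cs (y j) (hyY j)
  set SS : ℕ → ↥(CS M) := fun j => ⟨Set.range (u j), hcs j⟩ with hSS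
  obtain ⟨j, hj⟩ := hesc
    (φ (fun n => (Finset.range (n + 1)).sup fun i => (ψ (SS i) : ℕ → ℕ) n)).1 (φ _).2
  apply hj
  have hrel := hmor (SS j) (fun n => (Finset.range (n + 1)).sup fun i => (ψ (SS i) : ℕ → ℕ) n)
    (kaux_leInf_diag (fun i => (ψ (SS i) : ℕ → ℕ)) j)
  exact ((kaux_notClosedIn_iff (hu j) (hne j) (hlim j) _).mp hrel).1

lemma kaux_forward_prod (h : (leInfRel.prod omegaRel).Tukey (kRel M)) :
    ∃ K : ℕ → Set M, (∀ n, IsCompact (K n)) ∧ nonIsolated M = ⋃ n, K n := by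
  obtain ⟨ψ, φ, hmor₀⟩ := h
  have hmor : ∀ (S : ↥(CS M)) (q : (ℕ → ℕ) × ℕ),
      leInf (ψ S).1 q.1 ∧ Nat.le (ψ S).2 q.2 →
        NotClosedIn S.1 (φ q).1 := hmor₀
  choose u hu hne hlim hcs using fun x : ↥(nonIsolated M) => kaux_exists_cs x.1 x.2
  set SS : ↥(nonIsolated M) → ↥(CS M) := fun x => ⟨Set.range (u x), hcs x⟩ with hSS
  set Y : ℕ → Set M := fun m => {x | ∃ h : x ∈ nonIsolated M, Nat.le (ψ (SS ⟨x, h⟩)).2 m} with hY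
  refine ⟨fun m => closure (Y m), fun m => ?_, ?_⟩
  · by_contra hnc
    obtain ⟨y, hyY, hesc⟩ := kaux_exists_escape hnc
    have hyni : ∀ j, y j ∈ nonIsolated M := fun j => (hyY j).choose
    have hym : ∀ j, Nat.le (ψ (SS ⟨y j, hyni j⟩)).2 m := fun j => (hyY j).choose_spec
    set S : ℕ → ↥(CS M) := fun j => SS ⟨y j, hyni j⟩ with hS
    obtain ⟨j, hj⟩ := hesc
      (φ (((fun n => (Finset.range (n + 1)).sup fun i => (ψ (S i)).1 n), m) :
        (ℕ → ℕ) × ℕ)).1 (φ _).2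
    apply hj
    have hrel := hmor (S j)
      (((fun n => (Finset.range (n + 1)).sup fun i => (ψ (S i)).1 n), m) :
        (ℕ → ℕ) × ℕ)
      ⟨kaux_leInf_diag (fun i => (ψ (S i)).1) j, hym j⟩
    exact ((kaux_notClosedIn_iff (hu ⟨y j, hyni j⟩) (hne ⟨y j, hyni j⟩)
      (hlim ⟨y j, hyni j⟩) _).mp hrel).1
  · apply Set.Subset.antisymm
    · intro x hx
      exact Set.mem_iUnion.mpr ⟨(ψ (SS ⟨x, hx⟩)).2, subset_closure ⟨hx, Nat.le_refl _⟩⟩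
    · apply Set.iUnion_subset
      intro m
      have hYsub : Y m ⊆ nonIsolated M := by
        rintro x ⟨hx, -⟩
        exact hx
      exact closure_minimal hYsub kaux_isClosed_nonIsolated

lemma kaux_forward_with (h : (leInfRel.with' omegaRel).Tukey (kRel M)) :
    (∃ K : ℕ → Set M, (∀ n, IsCompact (K n)) ∧ nonIsolated M = ⋃ n, K n) ∧
      IsCompact (nonLC M) := by
  constructor
  · exact kaux_forward_prod (kaux_tukey_trans kaux_prod_tukey_with h)
  · obtain ⟨ψ, φ, hmor₀⟩ := h
    have hmor : ∀ (S : ↥(CS M)) (q : (ℕ → ℕ) × ℕ),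
        Sum.elim (fun g => leInf g q.1) (fun m => m ≤ q.2) (ψ S : (ℕ → ℕ) ⊕ ℕ) →
          NotClosedIn S.1 (φ q).1 := hmor₀
    by_contra hnc
    rw [← (kaux_isClosed_nonLC (M := M)).closure_eq] at hnc
    obtain ⟨y, hyY, hesc⟩ := kaux_exists_escape hnc
    have hW : ∀ n : ℕ, IsCompact (⋃ i ∈ Finset.range (n + 1), (φ ((fun _ => 0, i) : (ℕ → ℕ) × ℕ)).1) :=
      fun n => (Finset.range (n + 1)).isCompact_biUnion (fun i _ => (φ _).2)
    have key : ∀ j : ℕ, ∃ u : ℕ → M, Function.Injective u ∧ (∀ n, u n ≠ y j) ∧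
        Tendsto u atTop (nhds (y j)) ∧
        (∀ n, u n ∉ ⋃ i ∈ Finset.range (n + 1), (φ ((fun _ => 0, i) : (ℕ → ℕ) × ℕ)).1) ∧
        Set.range u ∈ CS M := by
      intro j
      obtain ⟨u, h1, h2, h3, h4⟩ := kaux_exists_avoid_seq (y j) _
        (fun n => kaux_nonLC_pick (hyY j) (hW n))
      exact ⟨u, h1, h2, h3, h4, kaux_cs_intro h1 h2 h3⟩
    choose u hu hne hlim havoid hcs using key
    set S : ℕ → ↥(CS M) := fun j => ⟨Set.range (u j), hcs j⟩ with hS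
    have hinl : ∀ j, ∃ g, ψ (S j) = Sum.inl g := by
      intro j
      obtain ⟨d, hd⟩ : ∃ d : (ℕ → ℕ) ⊕ ℕ, ψ (S j) = d := ⟨ψ (S j), rfl⟩
      cases d with
      | inl g => exact ⟨g, hd⟩
      | inr m =>
        exfalso
        have hrel := hmor (S j) ((fun _ => 0 : ℕ → ℕ), m) (by rw [hd]; exact Nat.le_refl m)
        rw [kaux_notClosedIn_iff (hu j) (hne j) (hlim j)] at hrel
        refine hrel.2 (Set.Finite.subset ((Set.finite_Iio m).image (u j)) ?_)
        rintro z ⟨⟨i, rfl⟩, hzK⟩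
        refine ⟨i, Set.mem_Iio.mpr ?_, rfl⟩
        by_contra hge
        push_neg at hge
        exact havoid j i (Set.mem_biUnion (Finset.mem_range.mpr (by omega)) hzK)
    choose g hg using hinl
    obtain ⟨j, hj⟩ := hesc
      (φ (((fun n => (Finset.range (n + 1)).sup fun i => g i n), 0) : (ℕ → ℕ) × ℕ)).1 (φ _).2
    apply hj
    have hrel := hmor (S j)
      (((fun n => (Finset.range (n + 1)).sup fun i => g i n), 0) : (ℕ → ℕ) × ℕ)
      (by rw [hg j]; exact kaux_leInf_diag g j)
    exact ((kaux_notClosedIn_iff (hu j) (hne j) (hlim j) _).mp hrel).1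

end KAux7

/-- upper bounds for the k-structure of a separable metrizable space. -/
theorem kRel_upper_bounds (M : Type u) [TopologicalSpace M]
    [TopologicalSpace.MetrizableSpace M] [TopologicalSpace.SeparableSpace M] :
    (omegaRel.Tukey (kRel M) ↔ nonLC M = ∅) ∧
    (leInfRel.Tukey (kRel M) ↔ IsCompact (nonIsolated M)) ∧
    ((leInfRel.with' omegaRel).Tukey (kRel M) ↔
      ((∃ K : ℕ → Set M, (∀ n, IsCompact (K n)) ∧ nonIsolated M = ⋃ n, K n) ∧
        IsCompact (nonLC M))) ∧
    ((leInfRel.prod omegaRel).Tukey (kRel M) ↔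
      (∃ K : ℕ → Set M, (∀ n, IsCompact (K n)) ∧ nonIsolated M = ⋃ n, K n)) := by
  
  letI m : MetricSpace M := TopologicalSpace.metrizableSpaceMetric M
  haveI hsep : @TopologicalSpace.SeparableSpace M m.toUniformSpace.toTopologicalSpace :=
    ‹TopologicalSpace.SeparableSpace M›
  exact ⟨⟨kaux_forward_omega, kaux_tukey_omega⟩,
    ⟨kaux_forward_leInf, kaux_tukey_leInf⟩,
    ⟨kaux_forward_with, fun h => kaux_tukey_with h.1 h.2⟩,
    ⟨kaux_forward_prod, kaux_tukey_prod⟩⟩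
end
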